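/- arXiv:1903.11841 — 12 statements merged into one kernel-verified Lean document; each statement's English description precedes it below -/
import Mathlib

section
/- Let ρ(p,q,s,t,v,w) denote the symmetric 2×2 real matrix with entries ρ₁₁ = p² + q² − s² − t² − pw − tw, ρ₁₂ = ρ₂₁ = −(p+t)v + (q+s)w, and ρ₂₂ = qv − sv + (p − t − w)w. Then for (p,q,s,t,v,w) ∈ ℝ⁶ one has ρ(p,q,s,t,v,w) = 0 if and only if there exist θ ∈ ℝ and r ∈ ℝ such that v = r·cos θ, w = r·sin θ, p = r·sin³θ + s·sin 2θ − t·cos 2θ, and q = r·cos θ·sin²θ + s·cos 2θ + t·sin 2θ. -/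
open Real

lemma polar_aux' (a b : ℝ) : ∃ φ : ℝ, a = Real.sqrt (a^2 + b^2) * Real.cos φ ∧
    b = Real.sqrt (a^2 + b^2) * Real.sin φ := by
  have h1 := Complex.norm_mul_cos_arg (⟨a, b⟩ : ℂ)
  have h2 := Complex.norm_mul_sin_arg (⟨a, b⟩ : ℂ)
  have h3 : ‖(⟨a, b⟩ : ℂ)‖ = Real.sqrt (a^2 + b^2) := by
    rw [Complex.norm_def, Complex.normSq_mk]; ring_nf
  rw [h3] at h1 h2
  exact ⟨Complex.arg ⟨a, b⟩, h1.symm, h2.symm⟩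

theorem stmt_0 (p q s t v w : ℝ) :
    (!![p^2 + q^2 - s^2 - t^2 - p*w - t*w, -(p+t)*v + (q+s)*w;
        -(p+t)*v + (q+s)*w, q*v - s*v + (p - t - w)*w] :
      Matrix (Fin 2) (Fin 2) ℝ) = 0 ↔
    ∃ θ r : ℝ, v = r * cos θ ∧ w = r * sin θ ∧
      p = r * sin θ ^ 3 + s * sin (2*θ) - t * cos (2*θ) ∧
      q = r * cos θ * sin θ ^ 2 + s * cos (2*θ) + t * sin (2*θ) := by
  constructor
  · intro h
    have h11 := congrFun (congrFun h 0) 0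
    have h12 := congrFun (congrFun h 0) 1
    have h22 := congrFun (congrFun h 1) 1
    simp only [Matrix.cons_val', Matrix.cons_val_zero, Matrix.empty_val',
      Matrix.cons_val_fin_one, Matrix.cons_val_one, Matrix.head_cons,
      Matrix.head_fin_const, Matrix.zero_apply, Matrix.of_apply,
      Matrix.head_fin_const] at h11 h12 h22
    obtain ⟨φ, hv, hw⟩ := polar_aux' v w
    set R := Real.sqrt (v^2 + w^2) with hR
    by_cases hR0 : R = 0
    · -- v = w = 0 case
      have hv0 : v = 0 := by rw [hv, hR0]; ring
      have hw0 : w = 0 := by rw [hw, hR0]; ring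
      subst hv0 hw0
      have key : p^2 + q^2 = s^2 + t^2 := by linarith [h11]
      obtain ⟨α, hs, ht⟩ := polar_aux' s t
      obtain ⟨β, hq, hp⟩ := polar_aux' q p
      have hm : Real.sqrt (q^2 + p^2) = Real.sqrt (s^2 + t^2) := by
        rw [show q^2 + p^2 = s^2 + t^2 by linarith]
      set m := Real.sqrt (s^2 + t^2) with hmdef
      rw [hm] at hq hp
      refine ⟨(α + β)/2, 0, by ring, by ring, ?_, ?_⟩
      · have h2 : 2 * ((α + β)/2) = α + β := by ring
        rw [h2, Real.sin_add, Real.cos_add, hs, ht, hp]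
        have pyth := Real.sin_sq_add_cos_sq α
        linear_combination (-(m * Real.sin β)) * pyth
      · have h2 : 2 * ((α + β)/2) = α + β := by ring
        rw [h2, Real.sin_add, Real.cos_add, hs, ht, hq]
        have pyth := Real.sin_sq_add_cos_sq α
        linear_combination (-(m * Real.cos β)) * pyth
    · -- R ≠ 0 case
      rw [hv, hw] at h12 h22
      have pyth := Real.sin_sq_add_cos_sq φ
      have h2' : -(p+t) * Real.cos φ + (q+s) * Real.sin φ = 0 := by
        apply mul_left_cancel₀ hR0
        linear_combination h12
      have h3' : (q - s) * Real.cos φ + (p - t - R * Real.sin φ) * Real.sin φ = 0 := by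
        apply mul_left_cancel₀ hR0
        linear_combination h22
      refine ⟨φ, R, hv, hw, ?_, ?_⟩
      · rw [Real.sin_two_mul, Real.cos_two_mul]
        linear_combination (-Real.cos φ) * h2' + Real.sin φ * h3' + (t - p) * pyth
      · rw [Real.sin_two_mul, Real.cos_two_mul]
        linear_combination Real.sin φ * h2' + Real.cos φ * h3' + (-s - q) * pyth
  · rintro ⟨θ, r, hv, hw, hp, hq⟩
    rw [Real.sin_two_mul, Real.cos_two_mul] at hp hq
    subst hv hw hp hq
    have pyth := Real.sin_sq_add_cos_sq θ
    set sn := Real.sin θ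
    set c := Real.cos θ
    ext i j
    fin_cases i <;> fin_cases j <;>
      simp only [Fin.zero_eta, Fin.mk_one, Fin.isValue, Matrix.cons_val', Matrix.cons_val_zero,
        Matrix.empty_val', Matrix.cons_val_fin_one, Matrix.cons_val_one, Matrix.head_cons,
        Matrix.head_fin_const, Matrix.zero_apply, Matrix.of_apply]
    · linear_combination (2*sn*r*t + sn^4*r^2 + 4*c*sn^2*r*s + 4*c^2*t^2 + 4*c^2*s^2) * pyth
    · linear_combination (2*c*r*t) * pyth
    · linear_combination (2*c*r*t) * pyth
    · linear_combination (sn^2*r^2 + 2*c*r*s) * pyth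
end

section
/- Define Φ : ℝ × ℝ³ → ℝ⁶ by Φ(θ, r, s, t) = (p, q, s, t, v, w) where v = r·cos θ, w = r·sin θ, p = r·sin³θ + s·sin 2θ − t·cos 2θ, and q = r·cos θ·sin²θ + s·cos 2θ + t·sin 2θ. Then for (r, s, t) ≠ (0,0,0) and (r', s', t') ≠ (0,0,0) and any θ, θ' ∈ ℝ, one has Φ(θ, r, s, t) = Φ(θ', r', s', t') if and only if s = s', t = t', and there exists n ∈ ℤ with θ' = θ + nπ and r' = (−1)ⁿ r. -/
open Real

/-- The parametrization of the flat Type A models. -/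
noncomputable def Φ (θ r s t : ℝ) : ℝ × ℝ × ℝ × ℝ × ℝ × ℝ :=
  (r * sin θ ^ 3 + s * sin (2*θ) - t * cos (2*θ),
   r * cos θ * sin θ ^ 2 + s * cos (2*θ) + t * sin (2*θ),
   s, t, r * cos θ, r * sin θ)

theorem stmt_1 (θ θ' r s t r' s' t' : ℝ)
    (h : ¬ (r = 0 ∧ s = 0 ∧ t = 0)) (h' : ¬ (r' = 0 ∧ s' = 0 ∧ t' = 0)) :
    Φ θ r s t = Φ θ' r' s' t' ↔
      s = s' ∧ t = t' ∧ ∃ n : ℤ, θ' = θ + n * π ∧ r' = (-1 : ℝ)^n * r := by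
  constructor
  · intro heq
    simp only [Φ, Prod.mk.injEq] at heq
    obtain ⟨e1, e2, es, et, ev, ew⟩ := heq
    subst es; subst et
    refine ⟨rfl, rfl, ?_⟩
    have h1 := sin_sq_add_cos_sq θ
    have h2 := sin_sq_add_cos_sq θ'
    by_cases hr : r = 0
    · subst hr
      have hv : r' * cos θ' = 0 := by linarith [ev]
      have hw : r' * sin θ' = 0 := by linarith [ew]
      have hr' : r' = 0 := by
        by_contra h0
        have hc : cos θ' = 0 := by
          rcases mul_eq_zero.1 hv with h | h
          · exact absurd h h0
          · exact h
        have hs : sin θ' = 0 := by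
          rcases mul_eq_zero.1 hw with h | h
          · exact absurd h h0
          · exact h
        rw [hc, hs] at h2; norm_num at h2
      subst hr'
      have hst : ¬ (s = 0 ∧ t = 0) := by tauto
      have h3 := sin_sq_add_cos_sq (2*θ')
      have A : s * cos (2*θ - 2*θ') + t * sin (2*θ - 2*θ') = s := by
        rw [cos_sub, sin_sub]
        linear_combination sin (2*θ') * e1 + cos (2*θ') * e2 + s * h3
      have B : t * cos (2*θ - 2*θ') - s * sin (2*θ - 2*θ') = t := by
        rw [cos_sub, sin_sub]
        linear_combination (-cos (2*θ')) * e1 + sin (2*θ') * e2 + t * h3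
      have hst2 : s^2 + t^2 ≠ 0 := by
        intro h0
        exact hst ⟨by nlinarith [sq_nonneg s, sq_nonneg t], by nlinarith [sq_nonneg s, sq_nonneg t]⟩
      have hC : cos (2*θ - 2*θ') = 1 := by
        have : (s^2 + t^2) * (cos (2*θ - 2*θ') - 1) = 0 := by
          linear_combination s * A + t * B
        have := mul_eq_zero.1 this
        rcases this with h0 | h0
        · exact absurd h0 hst2
        · linarith
      obtain ⟨m, hm⟩ := (cos_eq_one_iff _).1 hC
      refine ⟨-m, ?_, by simp⟩
      push_cast
      linarith [hm]
    · have hrr : r'^2 = r^2 := by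
        linear_combination -(r*cos θ + r'*cos θ')*ev - (r*sin θ + r'*sin θ')*ew - r'^2*h2 + r^2*h1
      have hr' : r' ≠ 0 := by
        intro h0
        apply hr
        have : r^2 = 0 := by rw [← hrr, h0]; ring
        exact pow_eq_zero_iff (n := 2) (by norm_num) |>.1 this
      have hc : r' * cos (θ' - θ) = r := by
        rw [cos_sub]
        linear_combination -cos θ * ev - sin θ * ew + r * h1
      have hsq := sin_sq_add_cos_sq (θ' - θ)
      have hs0 : (r' * sin (θ' - θ))^2 = 0 := by
        linear_combination r'^2 * hsq - (r'*cos (θ'-θ) + r)*hc + hrr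
      have hs : sin (θ' - θ) = 0 := by
        have := pow_eq_zero_iff (n := 2) (by norm_num) |>.1 hs0
        rcases mul_eq_zero.1 this with h0 | h0
        · exact absurd h0 hr'
        · exact h0
      obtain ⟨n, hn⟩ := sin_eq_zero_iff.1 hs
      have hθ' : θ' = θ + n * π := by linarith [hn]
      refine ⟨n, hθ', ?_⟩
      rw [hθ'] at ev ew
      rw [cos_add_int_mul_pi] at ev
      rw [sin_add_int_mul_pi] at ew
      have h11 : ((-1:ℝ)^n) * ((-1:ℝ)^n) = 1 := by
        rw [← zpow_add₀ (by norm_num : (-1:ℝ) ≠ 0)]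
        exact Even.neg_one_zpow ⟨n, rfl⟩
      have e1' : (r - (-1:ℝ)^n * r') * cos θ = 0 := by linear_combination ev
      have e2' : (r - (-1:ℝ)^n * r') * sin θ = 0 := by linear_combination ew
      have key : r - (-1:ℝ)^n * r' = 0 := by
        by_contra h0
        have hc0 : cos θ = 0 := by
          rcases mul_eq_zero.1 e1' with h | h
          · exact absurd h h0
          · exact h
        have hs0' : sin θ = 0 := by
          rcases mul_eq_zero.1 e2' with h | h
          · exact absurd h h0
          · exact h
        rw [hc0, hs0'] at h1; norm_num at h1
      linear_combination (-(-1:ℝ)^n) * key - r' * h11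
  · rintro ⟨rfl, rfl, n, rfl, rfl⟩
    have h11 : ((-1:ℝ)^n) * ((-1:ℝ)^n) = 1 := by
      rw [← zpow_add₀ (by norm_num : (-1:ℝ) ≠ 0)]
      exact Even.neg_one_zpow ⟨n, rfl⟩
    have hsin := sin_add_int_mul_pi θ n
    have hcos := cos_add_int_mul_pi θ n
    have h2eq : 2 * (θ + (n:ℝ) * π) = 2*θ + (n:ℝ) * (2*π) := by ring
    simp only [Φ, Prod.mk.injEq, h2eq, sin_add_int_mul_two_pi, cos_add_int_mul_two_pi,
      hsin, hcos]
    refine ⟨?_, ?_, trivial, trivial, ?_, ?_⟩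
    · linear_combination (-(r * sin θ ^ 3)) * (((-1:ℝ)^n) * ((-1:ℝ)^n) + 1) * h11
    · linear_combination (-(r * cos θ * sin θ ^ 2)) * (((-1:ℝ)^n) * ((-1:ℝ)^n) + 1) * h11
    · linear_combination (-(r * cos θ)) * h11
    · linear_combination (-(r * sin θ)) * h11
end

section
/- Let 𝒜⁰ = { x ∈ ℝ⁶ : x ≠ 0 and Ric(x) = 0 }, equipped with the subspace topology from ℝ⁶, where Ric(a,b,c,d,e,f) is the symmetric 2×2 matrix with entries Ric₁₁ = (a−d)d + b(f−c), Ric₁₂ = Ric₂₁ = cd − be, Ric₂₂ = c(f−c) + (a−d)e. Then 𝒜⁰ is homeomorphic to the quotient of ℝ × (ℝ³ ∖ {0}) by the ℤ-action in which n ∈ ℤ sends (θ, x₁, x₂, x₃) to (θ + nπ, (−1)ⁿx₁, x₂, x₃); this quotient is the total space of the Whitney sum of the Möbius line bundle and two trivial line bundles over the circle, minus its zero section. -/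
/-- The space of Type A models: `(a,b,c,d,e,f)` records the Christoffel symbols. -/
abbrev R6 : Type := ℝ × ℝ × ℝ × ℝ × ℝ × ℝ

/-- The Ricci tensor of the Type A model with Christoffel symbols `(a,b,c,d,e,f)`. -/
def Ric : R6 → Matrix (Fin 2) (Fin 2) ℝ
  | (a, b, c, d, e, f) =>
    !![(a-d)*d + b*(f-c), c*d - b*e; c*d - b*e, c*(f-c) + (a-d)*e]

/-- The set of nonzero flat Type A models, with the subspace topology from ℝ⁶. -/
def A0 : Set R6 := {x | x ≠ 0 ∧ Ric x = 0}

/-- The ℤ-action identification on ℝ × (ℝ³ ∖ {0}):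
`n` sends `(θ, x₁, x₂, x₃)` to `(θ + nπ, (−1)ⁿ x₁, x₂, x₃)`. -/
def rel (x y : {p : ℝ × (ℝ × ℝ × ℝ) // p.2 ≠ 0}) : Prop :=
  ∃ n : ℤ, y.1.1 = x.1.1 + n * Real.pi ∧
    y.1.2.1 = (-1 : ℝ)^n * x.1.2.1 ∧
    y.1.2.2.1 = x.1.2.2.1 ∧ y.1.2.2.2 = x.1.2.2.2

noncomputable section

/-- parametrization with explicit cosine/sine values -/
def Gm (C S x1 x2 x3 : ℝ) : R6 :=
  ((C*x2 - S*x3)*C - x1*S, (C*x2 - S*x3)*S, (S*x2 + C*x3)*S,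
   (C*x2 - S*x3)*C, (S*x2 + C*x3)*C, x1*C + (S*x2 + C*x3)*S)

def Fm (p : ℝ × (ℝ × ℝ × ℝ)) : R6 :=
  Gm (Real.cos p.1) (Real.sin p.1) p.2.1 p.2.2.1 p.2.2.2

lemma ric_zero_iff (a b c d e f : ℝ) :
    Ric (a,b,c,d,e,f) = 0 ↔
      (a-d)*d + b*(f-c) = 0 ∧ c*d - b*e = 0 ∧ c*(f-c) + (a-d)*e = 0 := by
  constructor
  · intro h
    refine ⟨?_, ?_, ?_⟩
    · simpa [Ric] using congrFun (congrFun h 0) 0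
    · simpa [Ric] using congrFun (congrFun h 0) 1
    · simpa [Ric] using congrFun (congrFun h 1) 1
  · rintro ⟨h1, h2, h3⟩
    ext i j
    fin_cases i <;> fin_cases j <;> simp [Ric, h1, h2, h3]

lemma ric_Gm (C S x1 x2 x3 : ℝ) : Ric (Gm C S x1 x2 x3) = 0 := by
  rw [Gm, ric_zero_iff]
  refine ⟨by ring, by ring, by ring⟩

lemma Gm_zero_iff (C S x1 x2 x3 : ℝ) (h1 : C^2 + S^2 = 1)
    (h : Gm C S x1 x2 x3 = 0) : x1 = 0 ∧ x2 = 0 ∧ x3 = 0 := by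
  simp only [Gm, Prod.mk_eq_zero] at h
  obtain ⟨ha, hb, hc, hd, he, hf⟩ := h
  have hs : C*x2 - S*x3 = 0 := by linear_combination C*hd + S*hb - (C*x2-S*x3)*h1
  have ht : S*x2 + C*x3 = 0 := by linear_combination C*he + S*hc - (S*x2+C*x3)*h1
  have hx1 : x1 = 0 := by
    have h1' : x1*S = 0 := by linear_combination hd - ha
    have h2' : x1*C = 0 := by linear_combination hf - hc
    nlinarith [sq_nonneg x1]
  refine ⟨hx1, ?_, ?_⟩
  · linear_combination C*hs + S*ht - x2*h1
  · linear_combination C*ht - S*hs - x3*h1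

lemma key' (a b c d e f C S s t x1 : ℝ) (h1 : C^2+S^2 = 1)
    (hsC : s*C = d) (hsS : s*S = b) (htC : t*C = e) (htS : t*S = c)
    (hx1S : x1*S = d - a) (hx1C : x1*C = f - c) :
    Gm C S x1 (C*s + S*t) (C*t - S*s) = (a, b, c, d, e, f) := by
  simp only [Gm, Prod.mk.injEq]
  refine ⟨?_, ?_, ?_, ?_, ?_, ?_⟩
  · linear_combination (s*C)*h1 + hsC - hx1S
  · linear_combination (s*S)*h1 + hsS
  · linear_combination (t*S)*h1 + htS
  · linear_combination (s*C)*h1 + hsC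
  · linear_combination (t*C)*h1 + htC
  · linear_combination (t*S)*h1 + htS + hx1C

/-- Main reconstruction: given aligned direction (C,S), Gm of the recovered
coordinates gives back the point. -/
lemma key (a b c d e f C S : ℝ) (h1 : C^2+S^2 = 1)
    (hdb : d*S = b*C) (hec : e*S = c*C) (hw : (a-d)*C + (f-c)*S = 0) :
    Gm C S ((f-c)*C - (a-d)*S) (C*(d*C+b*S) + S*(e*C+c*S)) (C*(e*C+c*S) - S*(d*C+b*S))
      = (a, b, c, d, e, f) := by
  apply key'
  · exact h1
  · linear_combination d*h1 - S*hdb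
  · linear_combination b*h1 + C*hdb
  · linear_combination e*h1 - S*hec
  · linear_combination c*h1 + C*hec
  · linear_combination C*hw - (a-d)*h1
  · linear_combination (f-c)*h1 - S*hw

lemma Fm_per (θ : ℝ) (n : ℤ) (x1 x2 x3 : ℝ) :
    Fm (θ + n*Real.pi, (-1:ℝ)^n * x1, x2, x3) = Fm (θ, x1, x2, x3) := by
  have hε : ((-1:ℝ)^n)^2 = 1 := by
    rw [← zpow_natCast]
    rw [← zpow_mul]
    rw [mul_comm, zpow_mul]
    norm_num
  simp only [Fm, Gm, Real.cos_add_int_mul_pi, Real.sin_add_int_mul_pi, Prod.mk.injEq]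
  set ε := ((-1:ℝ)^n) with hεdef
  set C := Real.cos θ
  set S := Real.sin θ
  refine ⟨?_, ?_, ?_, ?_, ?_, ?_⟩
  · linear_combination ((C*x2-S*x3)*C - x1*S)*hε
  · linear_combination ((C*x2-S*x3)*S)*hε
  · linear_combination ((S*x2+C*x3)*S)*hε
  · linear_combination ((C*x2-S*x3)*C)*hε
  · linear_combination ((S*x2+C*x3)*C)*hε
  · linear_combination (x1*C + (S*x2+C*x3)*S)*hε

lemma pair_eq {ρ ρ' C S ε : ℝ} (h1 : C^2+S^2 = 1) (hε : ε^2 = 1)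
    (hC : ρ*C = ρ'*(ε*C)) (hS : ρ*S = ρ'*(ε*S)) : ρ' = ε*ρ := by
  have e1 : ρ*C - ρ'*(ε*C) = 0 := by linear_combination hC
  have e2 : ρ*S - ρ'*(ε*S) = 0 := by linear_combination hS
  have h0 : (ρ - ρ'*ε)^2 = 0 := by
    linear_combination (-(ρ - ρ'*ε)^2)*h1 + ((ρ - ρ'*ε)*C)*e1 + ((ρ - ρ'*ε)*S)*e2
  have h0' : ρ - ρ'*ε = 0 := by
    have := sq_eq_zero_iff.mp h0
    exact this
  linear_combination (-ρ')*hε - ε*h0'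

lemma angle_step {C S C' S' r r' : ℝ} (h1 : C^2+S^2 = 1) (h1' : C'^2+S'^2 = 1)
    (hr : r ≠ 0) (hC : r*C = r'*C') (hS : r*S = r'*S') : S'*C - C'*S = 0 := by
  have key : (S'*C - C'*S) * (r*r) = 0 := by
    linear_combination (r*S')*hC - (r*C')*hS
  rcases mul_eq_zero.mp key with h | h
  · exact h
  · exact absurd h (mul_ne_zero hr hr)

lemma inj {θ θ' x1 x2 x3 x1' x2' x3' : ℝ}
    (h : Fm (θ, x1, x2, x3) = Fm (θ', x1', x2', x3'))
    (hx : ¬(x1 = 0 ∧ x2 = 0 ∧ x3 = 0)) :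
    ∃ n : ℤ, θ' = θ + n * Real.pi ∧ x1' = (-1:ℝ)^n * x1 ∧ x2' = x2 ∧ x3' = x3 := by
  simp only [Fm, Gm, Prod.mk.injEq] at h
  obtain ⟨ha, hb, hc, hd, he, hf⟩ := h
  set C := Real.cos θ with hCdef
  set S := Real.sin θ with hSdef
  set C' := Real.cos θ' with hC'def
  set S' := Real.sin θ' with hS'def
  have h1 : C^2 + S^2 = 1 := Real.cos_sq_add_sin_sq θ
  have h1' : C'^2 + S'^2 = 1 := Real.cos_sq_add_sin_sq θ'
  have hx1S : x1*S = x1'*S' := by linear_combination hd - ha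
  have hx1C : x1*C = x1'*C' := by linear_combination hf - hc
  -- find nonzero coefficient and derive the angle relation
  have hsin : S'*C - C'*S = 0 := by
    by_cases h01 : x1 = 0
    · by_cases h02 : C*x2 - S*x3 = 0
      · have h03 : ¬ (S*x2 + C*x3 = 0) := by
          intro h03
          apply hx
          refine ⟨h01, ?_, ?_⟩
          · linear_combination C*h02 + S*h03 - x2*h1
          · linear_combination C*h03 - S*h02 - x3*h1
        exact angle_step h1 h1' h03 he hc
      · exact angle_step h1 h1' h02 hd hb
    · exact angle_step h1 h1' h01 hx1C hx1S
  have hsin0 : Real.sin (θ' - θ) = 0 := by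
    rw [Real.sin_sub]; linear_combination hsin
  obtain ⟨n, hn⟩ := Real.sin_eq_zero_iff.mp hsin0
  have hθ' : θ' = θ + n * Real.pi := by linarith
  have hε : ((-1:ℝ)^n)^2 = 1 := by
    rw [← zpow_natCast, ← zpow_mul, mul_comm, zpow_mul]; norm_num
  set ε := ((-1:ℝ)^n) with hεdef
  have hC' : C' = ε * C := by rw [hC'def, hθ', Real.cos_add_int_mul_pi]
  have hS' : S' = ε * S := by rw [hS'def, hθ', Real.sin_add_int_mul_pi]
  have hεne : ε ≠ 0 := by
    intro h0; rw [h0] at hε; norm_num at hε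
  simp only [hC', hS'] at hd hb he hc hx1C hx1S
  have hx1' : x1' = ε * x1 := pair_eq h1 hε hx1C hx1S
  have hP : ε*C*x2' - ε*S*x3' = ε * (C*x2 - S*x3) := pair_eq h1 hε hd hb
  have hQ : ε*S*x2' + ε*C*x3' = ε * (S*x2 + C*x3) := pair_eq h1 hε he hc
  have hs'' : C*x2' - S*x3' = C*x2 - S*x3 := by
    apply mul_left_cancel₀ hεne
    linear_combination hP
  have ht'' : S*x2' + C*x3' = S*x2 + C*x3 := by
    apply mul_left_cancel₀ hεne
    linear_combination hQ
  refine ⟨n, hθ', hx1', ?_, ?_⟩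
  · linear_combination C*hs'' + S*ht'' - (x2'-x2)*h1
  · linear_combination C*ht'' - S*hs'' - (x3'-x3)*h1

def zc (X Y : ℝ) : ℂ := (X : ℂ) + (Y : ℂ) * Complex.I

lemma zc_re (X Y : ℝ) : (zc X Y).re = X := by simp [zc]
lemma zc_im (X Y : ℝ) : (zc X Y).im = Y := by simp [zc]

lemma zc_ne_zero {X Y : ℝ} (h : ¬(X = 0 ∧ Y = 0)) : zc X Y ≠ 0 := by
  intro h0
  apply h
  constructor
  · have := congrArg Complex.re h0; simpa [zc] using this
  · have := congrArg Complex.im h0; simpa [zc] using this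

lemma zc_abs_sq (X Y : ℝ) : ‖zc X Y‖^2 = X^2 + Y^2 := by
  rw [Complex.sq_norm, Complex.normSq_apply, zc_re, zc_im]; ring

/-- the local angle function: `arg z₀ + arg (z * conj z₀)`. -/
def thf (w₀ : ℝ × ℝ) (X Y : ℝ) : ℝ :=
  (zc w₀.1 w₀.2).arg + (zc X Y * (starRingEnd ℂ) (zc w₀.1 w₀.2)).arg

lemma thf_cos_sin (w₀ : ℝ × ℝ) (X Y : ℝ) (h₀ : zc w₀.1 w₀.2 ≠ 0)
    (h : zc X Y ≠ 0) :
    Real.cos (thf w₀ X Y) * ‖zc X Y‖ = X ∧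
    Real.sin (thf w₀ X Y) * ‖zc X Y‖ = Y := by
  set z₀ := zc w₀.1 w₀.2
  set z := zc X Y
  have hzz : z * (starRingEnd ℂ) z₀ ≠ 0 := by
    apply mul_ne_zero h
    simpa using h₀
  have habs0 : ‖z₀‖ ≠ 0 := by simpa using h₀
  have habs : ‖z‖ ≠ 0 := by simpa using h
  have habsm : ‖z * (starRingEnd ℂ) z₀‖ = ‖z‖ * ‖z₀‖ := by
    rw [norm_mul, Complex.norm_conj]
  have hre : (z * (starRingEnd ℂ) z₀).re = z.re * z₀.re + z.im * z₀.im := by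
    simp [Complex.mul_re, Complex.conj_re, Complex.conj_im]; try ring
  have him : (z * (starRingEnd ℂ) z₀).im = z.im * z₀.re - z.re * z₀.im := by
    simp [Complex.mul_im, Complex.conj_re, Complex.conj_im]; try ring
  have hsq0 : z₀.re^2 + z₀.im^2 = ‖z₀‖^2 := by
    rw [Complex.sq_norm, Complex.normSq_apply]; ring
  have hX : z.re = X := zc_re X Y
  have hY : z.im = Y := zc_im X Y
  constructor
  · rw [thf, Real.cos_add, Complex.cos_arg h₀, Complex.sin_arg,
      Complex.cos_arg hzz, Complex.sin_arg, hre, him, habsm, ← hX]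
    field_simp
    linear_combination z.re * hsq0 + (z.re * z₀.im^2 - z₀.re * z.im * z₀.im) * mul_inv_cancel₀ habs0
  · rw [thf, Real.sin_add, Complex.cos_arg h₀, Complex.sin_arg,
      Complex.cos_arg hzz, Complex.sin_arg, hre, him, habsm, ← hY]
    field_simp
    rw [show zc w₀.1 w₀.2 = z₀ from rfl]
    linear_combination z.im * hsq0 + (z₀.im * z.re * z₀.re + z₀.im^2 * z.im) * mul_inv_cancel₀ habs0

/-- Second stage of the section map: from `(θ, y)` produce parameters `(θ, x₁, x₂, x₃)`. -/
def sig2 : ℝ × R6 → ℝ × (ℝ × ℝ × ℝ) := fun p =>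
  (p.1,
   (p.2.2.2.2.2.2 - p.2.2.2.1) * Real.cos p.1 - (p.2.1 - p.2.2.2.2.1) * Real.sin p.1,
   Real.cos p.1 * (p.2.2.2.2.1 * Real.cos p.1 + p.2.2.1 * Real.sin p.1)
     + Real.sin p.1 * (p.2.2.2.2.2.1 * Real.cos p.1 + p.2.2.2.1 * Real.sin p.1),
   Real.cos p.1 * (p.2.2.2.2.2.1 * Real.cos p.1 + p.2.2.2.1 * Real.sin p.1)
     - Real.sin p.1 * (p.2.2.2.2.1 * Real.cos p.1 + p.2.2.1 * Real.sin p.1))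

lemma sig2_apply (θ a b c d e f : ℝ) :
    sig2 (θ, (a, b, c, d, e, f)) =
      (θ, (f-c)*Real.cos θ - (a-d)*Real.sin θ,
       Real.cos θ*(d*Real.cos θ + b*Real.sin θ) + Real.sin θ*(e*Real.cos θ + c*Real.sin θ),
       Real.cos θ*(e*Real.cos θ + c*Real.sin θ) - Real.sin θ*(d*Real.cos θ + b*Real.sin θ)) := by
  simp [sig2]

lemma continuous_sig2 : Continuous sig2 := by
  unfold sig2
  fun_prop

/-- The section map over the chart determined by `w₀` and coordinate functions `X`, `Y`. -/
def sig (w₀ : ℝ × ℝ) (X Y : R6 → ℝ) (y : R6) : ℝ × (ℝ × ℝ × ℝ) :=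
  sig2 (thf w₀ (X y) (Y y), y)

/-- The key reconstruction fact. -/
lemma Fm_sig (w₀ : ℝ × ℝ) (X Y : R6 → ℝ) (a b c d e f : ℝ)
    (h₀ : zc w₀.1 w₀.2 ≠ 0)
    (hne : ¬(X (a,b,c,d,e,f) = 0 ∧ Y (a,b,c,d,e,f) = 0))
    (hdb : d * Y (a,b,c,d,e,f) = b * X (a,b,c,d,e,f))
    (hec : e * Y (a,b,c,d,e,f) = c * X (a,b,c,d,e,f))
    (hw : (a-d) * X (a,b,c,d,e,f) + (f-c) * Y (a,b,c,d,e,f) = 0) :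
    Fm (sig w₀ X Y (a,b,c,d,e,f)) = (a,b,c,d,e,f) := by
  set XX := X (a,b,c,d,e,f)
  set YY := Y (a,b,c,d,e,f)
  have hz : zc XX YY ≠ 0 := zc_ne_zero hne
  set θ := thf w₀ XX YY with hθ
  obtain ⟨hcos, hsin⟩ := thf_cos_sin w₀ XX YY h₀ hz
  set m := ‖zc XX YY‖
  have hm : m ≠ 0 := by
    simp only [m, ne_eq, norm_eq_zero]
    exact hz
  set C := Real.cos θ
  set S := Real.sin θ
  have h1 : C^2 + S^2 = 1 := Real.cos_sq_add_sin_sq θ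
  have hdb' : d * S = b * C := by
    apply mul_right_cancel₀ hm
    linear_combination d*hsin - b*hcos + hdb
  have hec' : e * S = c * C := by
    apply mul_right_cancel₀ hm
    linear_combination e*hsin - c*hcos + hec
  have hw' : (a-d) * C + (f-c) * S = 0 := by
    apply mul_right_cancel₀ hm
    linear_combination (a-d)*hcos + (f-c)*hsin + hw
  have : sig w₀ X Y (a,b,c,d,e,f) = sig2 (θ, (a,b,c,d,e,f)) := rfl
  rw [this, sig2_apply]
  exact key a b c d e f C S h1 hdb' hec' hw'

/-! coordinate function pairs for the three charts -/

def Xd : R6 → ℝ := fun y => y.2.2.2.1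
def Yb : R6 → ℝ := fun y => y.2.1
def Xe : R6 → ℝ := fun y => y.2.2.2.2.1
def Yc : R6 → ℝ := fun y => y.2.2.1
def Xv : R6 → ℝ := fun y => y.2.2.2.2.2 - y.2.2.1
def Yu : R6 → ℝ := fun y => y.2.2.2.1 - y.1

lemma align1 (a b c d e f : ℝ) (h : Ric (a,b,c,d,e,f) = 0) :
    d * Yb (a,b,c,d,e,f) = b * Xd (a,b,c,d,e,f) ∧
    e * Yb (a,b,c,d,e,f) = c * Xd (a,b,c,d,e,f) ∧
    (a-d) * Xd (a,b,c,d,e,f) + (f-c) * Yb (a,b,c,d,e,f) = 0 := by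
  obtain ⟨h1, h2, h3⟩ := (ric_zero_iff a b c d e f).mp h
  refine ⟨by simp [Xd, Yb]; ring, ?_, ?_⟩
  · simp only [Xd, Yb]; linear_combination -h2
  · simp only [Xd, Yb]; linear_combination h1

lemma align2 (a b c d e f : ℝ) (h : Ric (a,b,c,d,e,f) = 0) :
    d * Yc (a,b,c,d,e,f) = b * Xe (a,b,c,d,e,f) ∧
    e * Yc (a,b,c,d,e,f) = c * Xe (a,b,c,d,e,f) ∧
    (a-d) * Xe (a,b,c,d,e,f) + (f-c) * Yc (a,b,c,d,e,f) = 0 := by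
  obtain ⟨h1, h2, h3⟩ := (ric_zero_iff a b c d e f).mp h
  refine ⟨?_, by simp [Xe, Yc]; ring, ?_⟩
  · simp only [Xe, Yc]; linear_combination h2
  · simp only [Xe, Yc]; linear_combination h3

lemma align3 (a b c d e f : ℝ) (h : Ric (a,b,c,d,e,f) = 0) :
    d * Yu (a,b,c,d,e,f) = b * Xv (a,b,c,d,e,f) ∧
    e * Yu (a,b,c,d,e,f) = c * Xv (a,b,c,d,e,f) ∧
    (a-d) * Xv (a,b,c,d,e,f) + (f-c) * Yu (a,b,c,d,e,f) = 0 := by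
  obtain ⟨h1, h2, h3⟩ := (ric_zero_iff a b c d e f).mp h
  refine ⟨?_, ?_, by simp [Xv, Yu]; ring⟩
  · simp only [Xv, Yu]; linear_combination -h1
  · simp only [Xv, Yu]; linear_combination -h3

lemma pick_case (a b c d e f : ℝ) (h0 : (a,b,c,d,e,f) ≠ (0 : R6)) :
    ¬(Xd (a,b,c,d,e,f) = 0 ∧ Yb (a,b,c,d,e,f) = 0) ∨
    ¬(Xe (a,b,c,d,e,f) = 0 ∧ Yc (a,b,c,d,e,f) = 0) ∨
    ¬(Xv (a,b,c,d,e,f) = 0 ∧ Yu (a,b,c,d,e,f) = 0) := by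
  by_contra hcon
  push_neg at hcon
  simp only [Xd, Yb, Xe, Yc, Xv, Yu, not_not] at hcon
  obtain ⟨⟨hd, hb⟩, ⟨he, hc⟩, ⟨hv, hu⟩⟩ := hcon
  apply h0
  have ha : a = 0 := by linarith
  have hf : f = 0 := by linarith
  simp only [Prod.mk_eq_zero]
  exact ⟨ha, hb, by linarith, hd, he, hf⟩

lemma Fm_of_zero (θ : ℝ) : Fm (θ, (0 : ℝ × ℝ × ℝ)) = 0 := by
  simp only [Fm, Gm]
  norm_num

lemma Fm_mem_A0 (p : ℝ × (ℝ × ℝ × ℝ)) (hp : p.2 ≠ 0) : Fm p ∈ A0 := by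
  constructor
  · intro h0
    apply hp
    have h1 : (Real.cos p.1)^2 + (Real.sin p.1)^2 = 1 := Real.cos_sq_add_sin_sq p.1
    have := Gm_zero_iff _ _ _ _ _ h1 h0
    obtain ⟨h2, h3, h4⟩ := this
    have : p.2 = (p.2.1, p.2.2.1, p.2.2.2) := rfl
    rw [this, h2, h3, h4]
    rfl
  · exact ric_Gm _ _ _ _ _

/-- the subtype of nonzero parameters -/
abbrev Par := {p : ℝ × (ℝ × ℝ × ℝ) // p.2 ≠ 0}

lemma surj (y : R6) (hy : y ∈ A0) : ∃ p : Par, Fm p.val = y := by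
  obtain ⟨a, b, c, d, e, f⟩ := y
  obtain ⟨h0, hric⟩ := hy
  have hcs := pick_case a b c d e f h0
  have main : ∃ q : ℝ × (ℝ × ℝ × ℝ), Fm q = (a,b,c,d,e,f) := by
    rcases hcs with h | h | h
    · obtain ⟨g1, g2, g3⟩ := align1 a b c d e f hric
      exact ⟨_, Fm_sig (Xd (a,b,c,d,e,f), Yb (a,b,c,d,e,f)) Xd Yb a b c d e f
        (zc_ne_zero h) h g1 g2 g3⟩
    · obtain ⟨g1, g2, g3⟩ := align2 a b c d e f hric
      exact ⟨_, Fm_sig (Xe (a,b,c,d,e,f), Yc (a,b,c,d,e,f)) Xe Yc a b c d e f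
        (zc_ne_zero h) h g1 g2 g3⟩
    · obtain ⟨g1, g2, g3⟩ := align3 a b c d e f hric
      exact ⟨_, Fm_sig (Xv (a,b,c,d,e,f), Yu (a,b,c,d,e,f)) Xv Yu a b c d e f
        (zc_ne_zero h) h g1 g2 g3⟩
  obtain ⟨q, hq⟩ := main
  refine ⟨⟨q, ?_⟩, hq⟩
  intro hq2
  apply h0
  rw [← hq]
  have : q = (q.1, q.2) := rfl
  rw [this, hq2, Fm_of_zero]

lemma rel_of_Fm_eq (p q : Par) (h : Fm p.val = Fm q.val) : rel p q := by
  obtain ⟨⟨θ, x1, x2, x3⟩, hp⟩ := p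
  obtain ⟨⟨θ', x1', x2', x3'⟩, hq⟩ := q
  have hx : ¬(x1 = 0 ∧ x2 = 0 ∧ x3 = 0) := by
    intro ⟨e1, e2, e3⟩
    apply hp
    simp only [Prod.mk_eq_zero]  -- (x1,x2,x3) = 0
    exact ⟨e1, e2, e3⟩
  obtain ⟨n, h1, h2, h3, h4⟩ := inj h hx
  exact ⟨n, h1, h2, h3, h4⟩

lemma sound_lemma (p q : Par) (h : rel p q) : Fm q.val = Fm p.val := by
  obtain ⟨⟨θ, x1, x2, x3⟩, hp⟩ := p
  obtain ⟨⟨θ', x1', x2', x3'⟩, hq⟩ := q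
  obtain ⟨n, h1, h2, h3, h4⟩ := h
  simp only at h1 h2 h3 h4
  have : (θ', x1', x2', x3') = (θ + n * Real.pi, (-1:ℝ)^n * x1, x2, x3) := by
    rw [h1, h2, h3, h4]
  simp only
  rw [this, Fm_per]

noncomputable def Gmap : Quot rel → ↥A0 :=
  Quot.lift (fun p => (⟨Fm p.val, Fm_mem_A0 p.val p.2⟩ : ↥A0))
    (fun p q h => by
      apply Subtype.ext
      simpa using (sound_lemma p q h).symm)

noncomputable def ginv : ↥A0 → Quot rel :=
  fun y => Quot.mk rel (Classical.choose (surj y.val y.2))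

lemma ginv_spec (y : ↥A0) : Fm (Classical.choose (surj y.val y.2)).val = y.val :=
  Classical.choose_spec (surj y.val y.2)

lemma left_inv' : Function.LeftInverse Gmap ginv := by
  intro y
  apply Subtype.ext
  simp only [ginv, Gmap]
  exact ginv_spec y

lemma right_inv' : Function.RightInverse Gmap ginv := by
  intro q
  induction q using Quot.ind with
  | _ p =>
    simp only [Gmap, ginv]
    apply Quot.sound
    apply rel_of_Fm_eq
    exact ginv_spec ⟨Fm p.val, Fm_mem_A0 p.val p.2⟩

/-! ### Continuity -/

lemma continuous_Fm : Continuous Fm := by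
  unfold Fm Gm
  fun_prop

lemma continuous_Gmap : Continuous Gmap := by
  apply continuous_quot_lift
  exact ((continuous_Fm.comp continuous_subtype_val).subtype_mk _)

lemma continuous_zc2 {X Y : R6 → ℝ} (hX : Continuous X) (hY : Continuous Y) :
    Continuous (fun y => zc (X y) (Y y)) := by
  unfold zc
  exact (Complex.continuous_ofReal.comp hX).add
    ((Complex.continuous_ofReal.comp hY).mul continuous_const)

lemma continuousAt_thf {X Y : R6 → ℝ} (hX : Continuous X) (hY : Continuous Y)
    (y₀ : R6) (h0 : ¬(X y₀ = 0 ∧ Y y₀ = 0)) :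
    ContinuousAt (fun y => thf (X y₀, Y y₀) (X y) (Y y)) y₀ := by
  have hz₀ : zc (X y₀) (Y y₀) ≠ 0 := zc_ne_zero h0
  have hin : ContinuousAt
      (fun y => zc (X y) (Y y) * (starRingEnd ℂ) (zc (X y₀) (Y y₀))) y₀ :=
    ((continuous_zc2 hX hY).mul continuous_const).continuousAt
  have harg : ContinuousAt Complex.arg
      (zc (X y₀) (Y y₀) * (starRingEnd ℂ) (zc (X y₀) (Y y₀))) := by
    apply Complex.continuousAt_arg
    rw [Complex.mem_slitPlane_iff]
    left
    have : zc (X y₀) (Y y₀) * (starRingEnd ℂ) (zc (X y₀) (Y y₀)) =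
        (Complex.normSq (zc (X y₀) (Y y₀)) : ℂ) := Complex.mul_conj _
    rw [this]
    simpa using Complex.normSq_pos.mpr hz₀
  have hcomp : ContinuousAt (Complex.arg ∘
      (fun y => zc (X y) (Y y) * (starRingEnd ℂ) (zc (X y₀) (Y y₀)))) y₀ :=
    ContinuousAt.comp (f := fun y => zc (X y) (Y y) * (starRingEnd ℂ) (zc (X y₀) (Y y₀))) harg hin
  unfold thf
  exact continuousAt_const.add hcomp

lemma continuousAt_sig {X Y : R6 → ℝ} (hX : Continuous X) (hY : Continuous Y)
    (y₀ : R6) (h0 : ¬(X y₀ = 0 ∧ Y y₀ = 0)) :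
    ContinuousAt (sig (X y₀, Y y₀) X Y) y₀ := by
  have h1 : ContinuousAt (fun y => (thf (X y₀, Y y₀) (X y) (Y y), y)) y₀ :=
    (continuousAt_thf hX hY y₀ h0).prodMk continuousAt_id
  exact (continuous_sig2.continuousAt).comp h1

lemma continuousAt_ginv_case (y₀ : ↥A0) (X Y : R6 → ℝ)
    (hX : Continuous X) (hY : Continuous Y)
    (halign : ∀ a b c d e f : ℝ, Ric (a,b,c,d,e,f) = 0 →
      d * Y (a,b,c,d,e,f) = b * X (a,b,c,d,e,f) ∧
      e * Y (a,b,c,d,e,f) = c * X (a,b,c,d,e,f) ∧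
      (a-d) * X (a,b,c,d,e,f) + (f-c) * Y (a,b,c,d,e,f) = 0)
    (hne : ¬(X y₀.val = 0 ∧ Y y₀.val = 0)) :
    ContinuousAt ginv y₀ := by
  set w₀ : ℝ × ℝ := (X y₀.val, Y y₀.val) with hw₀
  -- the reconstruction identity on flat points
  have hFσ : ∀ y : R6, Ric y = 0 → ¬(X y = 0 ∧ Y y = 0) → Fm (sig w₀ X Y y) = y := by
    rintro ⟨a, b, c, d, e, f⟩ hric hne'
    obtain ⟨g1, g2, g3⟩ := halign a b c d e f hric
    exact Fm_sig w₀ X Y a b c d e f (zc_ne_zero hne) hne' g1 g2 g3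
  -- the neighborhood where the chart is valid
  have hUopen : IsOpen {y : ↥A0 | ¬(X y.val = 0 ∧ Y y.val = 0)} := by
    have : {y : ↥A0 | ¬(X y.val = 0 ∧ Y y.val = 0)} =
        (fun y : ↥A0 => (X y.val, Y y.val)) ⁻¹' ({((0:ℝ), (0:ℝ))}ᶜ) := by
      ext y
      simp [Prod.ext_iff]
    rw [this]
    exact (isOpen_compl_singleton).preimage
      ((hX.comp continuous_subtype_val).prodMk (hY.comp continuous_subtype_val))
  have hU : {y : ↥A0 | ¬(X y.val = 0 ∧ Y y.val = 0)} ∈ nhds y₀ :=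
    hUopen.mem_nhds hne
  -- the candidate section into the parameter subtype
  classical
  set σ' : ↥A0 → Par := fun y =>
    if h : (sig w₀ X Y y.val).2 ≠ 0 then ⟨sig w₀ X Y y.val, h⟩
    else ⟨((0:ℝ), ((1:ℝ), (0:ℝ), (0:ℝ))), by simp⟩ with hσ'
  have hval : ∀ y : ↥A0, ¬(X y.val = 0 ∧ Y y.val = 0) →
      (sig w₀ X Y y.val).2 ≠ 0 ∧ (σ' y).val = sig w₀ X Y y.val ∧
      Fm ((σ' y).val) = y.val := by
    intro y hy
    have hid : Fm (sig w₀ X Y y.val) = y.val := hFσ y.val y.2.2 hy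
    have hnz : (sig w₀ X Y y.val).2 ≠ 0 := by
      intro h0
      apply y.2.1
      rw [← hid]
      have : sig w₀ X Y y.val = ((sig w₀ X Y y.val).1, (sig w₀ X Y y.val).2) := rfl
      rw [this, h0, Fm_of_zero]
    refine ⟨hnz, ?_, ?_⟩
    · simp only [hσ', dif_pos hnz]
    · simp only [hσ', dif_pos hnz]; exact hid
  -- ginv agrees with Quot.mk ∘ σ' near y₀
  have hevq : ginv =ᶠ[nhds y₀] fun y => Quot.mk rel (σ' y) := by
    filter_upwards [hU] with y hy
    obtain ⟨hnz, hv, hFy⟩ := hval y hy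
    have h1 : Fm (Classical.choose (surj y.val y.2)).val = Fm (σ' y).val := by
      rw [ginv_spec y, hFy]
    exact Quot.sound (rel_of_Fm_eq _ _ h1)
  -- continuity of σ'
  have hσcont : ContinuousAt σ' y₀ := by
    apply (Topology.IsInducing.continuousAt_iff Topology.IsInducing.subtypeVal).mpr
    have hev2 : (fun y : ↥A0 => sig w₀ X Y y.val) =ᶠ[nhds y₀]
        (Subtype.val ∘ σ') := by
      filter_upwards [hU] with y hy
      exact ((hval y hy).2.1).symm
    exact ContinuousAt.congr
      ((continuousAt_sig hX hY y₀.val hne).comp continuous_subtype_val.continuousAt) hev2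
  exact ContinuousAt.congr
    ((continuous_quot_mk.continuousAt).comp hσcont) hevq.symm

lemma continuous_ginv : Continuous ginv := by
  rw [continuous_iff_continuousAt]
  intro y₀
  have h0 : (y₀.val.1, y₀.val.2.1, y₀.val.2.2.1, y₀.val.2.2.2.1,
      y₀.val.2.2.2.2.1, y₀.val.2.2.2.2.2) ≠ (0 : R6) := y₀.2.1
  rcases pick_case _ _ _ _ _ _ h0 with h | h | h
  · exact continuousAt_ginv_case y₀ Xd Yb (by unfold Xd; fun_prop) (by unfold Yb; fun_prop)
      align1 h
  · exact continuousAt_ginv_case y₀ Xe Yc (by unfold Xe; fun_prop) (by unfold Yc; fun_prop)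
      align2 h
  · exact continuousAt_ginv_case y₀ Xv Yu (by unfold Xv; fun_prop) (by unfold Yu; fun_prop)
      align3 h


theorem stmt_2 : Nonempty (A0 ≃ₜ Quot rel) := by
  exact ⟨{ toFun := ginv, invFun := Gmap, left_inv := left_inv', right_inv := right_inv',
           continuous_toFun := continuous_ginv, continuous_invFun := continuous_Gmap }⟩

end
end

section
/- Let 𝒜¹₊ = { x ∈ ℝ⁶ : Ric(x) has rank 1 and Ric(x) is positive semidefinite }, equipped with the subspace topology from ℝ⁶, where Ric(a,b,c,d,e,f) is the symmetric 2×2 matrix with entries Ric₁₁ = (a−d)d + b(f−c), Ric₁₂ = Ric₂₁ = cd − be, Ric₂₂ = c(f−c) + (a−d)e. Then 𝒜¹₊ is homeomorphic to S¹ × S¹ × ℝ³, where S¹ is the unit circle. -/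
open Matrix

/-- A real matrix is positive semidefinite if it is symmetric and all the
associated quadratic form values are nonnegative. -/
def PosSemidef' (M : Matrix (Fin 2) (Fin 2) ℝ) : Prop :=
  Mᵀ = M ∧ ∀ x : Fin 2 → ℝ, 0 ≤ dotProduct x (M.mulVec x)

/-- Type A models whose Ricci tensor has rank one and is positive semidefinite,
with the subspace topology from ℝ⁶. -/
def A1pos : Set R6 := {x | (Ric x).rank = 1 ∧ PosSemidef' (Ric x)}

/-- The unit circle in the plane. -/
def unitCircle : Set (ℝ × ℝ) := {p | p.1^2 + p.2^2 = 1}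

/-! ### Auxiliary results -/

namespace A1posProof

/-! #### Rank facts for 2×2 real matrices -/

lemma rank_pos_of_ne (M : Matrix (Fin 2) (Fin 2) ℝ) (hM : M ≠ 0) : 0 < M.rank := by
  rw [Matrix.rank, Module.finrank_pos_iff_exists_ne_zero]
  obtain ⟨j, hj⟩ : ∃ j, M.mulVec (Pi.single j 1) ≠ 0 := by
    by_contra hall
    push_neg at hall
    apply hM
    ext i j
    have := congrFun (hall j) i
    simpa [Matrix.mulVec_single] using this
  exact ⟨⟨M.mulVec (Pi.single j 1), LinearMap.mem_range_self _ _⟩, by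
    intro h; exact hj (congrArg Subtype.val h)⟩

lemma rank_vmv (w : Fin 2 → ℝ) (hw : w ≠ 0) : (vecMulVec w w).rank = 1 := by
  refine le_antisymm ?_ ?_
  · calc (vecMulVec w w).rank = (replicateCol (Fin 1) w * replicateRow (Fin 1) w).rank := by
          rw [vecMulVec_eq (Fin 1)]; rfl
    _ ≤ (replicateCol (Fin 1) w).rank := rank_mul_le_left _ _
    _ ≤ Fintype.card (Fin 1) := rank_le_card_width _
    _ = 1 := by simp
  · have : vecMulVec w w ≠ 0 := by
      intro h
      apply hw
      funext i
      have := congrFun (congrFun h i) i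
      simpa [vecMulVec, mul_self_eq_zero] using this
    exact rank_pos_of_ne _ this

lemma det_eq_zero_of_rank_one (M : Matrix (Fin 2) (Fin 2) ℝ) (h : M.rank = 1) : M.det = 0 := by
  by_contra hd
  have : IsUnit M := (Matrix.isUnit_iff_isUnit_det M).2 (isUnit_iff_ne_zero.2 hd)
  have h2 := Matrix.rank_of_isUnit M this
  rw [h] at h2
  simp at h2

/-- characterization of rank-one positive semidefinite symmetric 2×2 matrices -/
lemma mem_char (m11 m12 m22 : ℝ) :
    ((!![m11,m12;m12,m22] : Matrix (Fin 2) (Fin 2) ℝ).rank = 1 ∧ PosSemidef' !![m11,m12;m12,m22])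
    ↔ (m11*m22 = m12^2 ∧ 0 ≤ m11 ∧ 0 ≤ m22 ∧ 0 < m11+m22) := by
  constructor
  · rintro ⟨hrk, -, hq⟩
    have hdet : m11*m22 = m12^2 := by
      have := det_eq_zero_of_rank_one _ hrk
      rw [Matrix.det_fin_two_of] at this
      nlinarith [this]
    have h11 : 0 ≤ m11 := by
      have := hq ![1,0]
      simpa [dotProduct, Matrix.mulVec, Fin.sum_univ_two] using this
    have h22 : 0 ≤ m22 := by
      have := hq ![0,1]
      simpa [dotProduct, Matrix.mulVec, Fin.sum_univ_two] using this
    refine ⟨hdet, h11, h22, ?_⟩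
    rcases lt_or_eq_of_le (by linarith : (0:ℝ) ≤ m11 + m22) with h | h
    · exact h
    · exfalso
      have e11 : m11 = 0 := by linarith
      have e22 : m22 = 0 := by linarith
      have e12 : m12 = 0 := by nlinarith
      have : (!![m11,m12;m12,m22] : Matrix (Fin 2) (Fin 2) ℝ) = 0 := by
        subst e11 e22 e12; ext i j; fin_cases i <;> fin_cases j <;> simp
      rw [this] at hrk
      simp at hrk
  · rintro ⟨hdet, h11, h22, htr⟩
    constructor
    · by_cases h0 : m11 = 0
      · have e22 : 0 < m22 := by rw [h0] at htr; simpa using htr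
        have e12 : m12 = 0 := by nlinarith
        have Meq : (!![m11,m12;m12,m22] : Matrix (Fin 2) (Fin 2) ℝ)
            = vecMulVec ![0, Real.sqrt m22] ![0, Real.sqrt m22] := by
          ext i j
          fin_cases i <;> fin_cases j <;>
            simp [vecMulVec, h0, e12, Real.mul_self_sqrt h22]
        rw [Meq]
        refine rank_vmv _ ?_
        intro h
        have := congrFun h 1
        simp [Real.sqrt_eq_zero'] at this
        linarith
      · have h11' : 0 < m11 := lt_of_le_of_ne h11 (Ne.symm h0)
        have hs : Real.sqrt m11 ≠ 0 := by positivity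
        have Meq : (!![m11,m12;m12,m22] : Matrix (Fin 2) (Fin 2) ℝ)
            = vecMulVec ![Real.sqrt m11, m12 / Real.sqrt m11]
                ![Real.sqrt m11, m12 / Real.sqrt m11] := by
          have hss : Real.sqrt m11 * Real.sqrt m11 = m11 := Real.mul_self_sqrt h11
          ext i j
          fin_cases i <;> fin_cases j <;> simp [vecMulVec, hss]
          all_goals field_simp
          all_goals nlinarith [hdet]
        rw [Meq]
        refine rank_vmv _ ?_
        intro h
        have := congrFun h 0
        simp [hs] at this
    · refine ⟨by ext i j; fin_cases i <;> fin_cases j <;> simp, fun χ => ?_⟩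
      have : dotProduct χ ((!![m11,m12;m12,m22] : Matrix (Fin 2) (Fin 2) ℝ).mulVec χ)
          = m11 * χ 0 ^2 + 2*m12*(χ 0)*(χ 1) + m22 * χ 1 ^2 := by
        simp [dotProduct, Matrix.mulVec, Fin.sum_univ_two]; ring
      rw [this]
      nlinarith [sq_nonneg (m11 * χ 0 + m12 * χ 1), sq_nonneg (m12 * χ 0 + m22 * χ 1), htr,
        mul_pos htr htr, sq_nonneg (χ 0), sq_nonneg (χ 1)]

/-! #### The Ricci entries as functions on `R6` -/

noncomputable section

def e11 (z : R6) : ℝ := (z.1 - z.2.2.2.1) * z.2.2.2.1 + z.2.1 * (z.2.2.2.2.2 - z.2.2.1)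
def e12 (z : R6) : ℝ := z.2.2.1 * z.2.2.2.1 - z.2.1 * z.2.2.2.2.1
def e22 (z : R6) : ℝ := z.2.2.1 * (z.2.2.2.2.2 - z.2.2.1) + (z.1 - z.2.2.2.1) * z.2.2.2.2.1

lemma Ric_eq (z : R6) : Ric z = !![e11 z, e12 z; e12 z, e22 z] := by
  obtain ⟨a, b, c, d, e, f⟩ := z
  rfl

lemma mem_A1pos (z : R6) :
    z ∈ A1pos ↔ (e11 z * e22 z = e12 z^2 ∧ 0 ≤ e11 z ∧ 0 ≤ e22 z ∧ 0 < e11 z + e22 z) := by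
  rw [show z ∈ A1pos ↔ ((Ric z).rank = 1 ∧ PosSemidef' (Ric z)) from Iff.rfl, Ric_eq]
  exact mem_char _ _ _

/-! #### The backward map data -/

def tr (z : R6) : ℝ := e11 z + e22 z
def xs (z : R6) : ℝ := e11 z - e22 z
def ys (z : R6) : ℝ := 2 * e12 z
def pp (z : R6) : ℝ := z.1 - z.2.2.2.1
def qq (z : R6) : ℝ := z.2.2.2.2.2 - z.2.2.1
def n1 (z : R6) : ℝ := pp z * xs z + (z.2.1 + z.2.2.1) * ys z
def n2 (z : R6) : ℝ := (z.2.2.2.1 + z.2.2.2.2.1) * ys z - qq z * xs z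
def G1 (z : R6) : ℝ := n1 z / tr z ^ 2
def G2 (z : R6) : ℝ := (z.2.2.1 - z.2.1) / tr z
def Bv (z : R6) : ℝ := (z.2.2.2.1 - z.2.2.2.2.1) / tr z
def Av (z : R6) : ℝ := n2 z / tr z ^ 2
def W1 (z : R6) : ℝ := (G1 z + Bv z)/2
def W2 (z : R6) : ℝ := (G2 z + Av z)/2
def Vv1 (z : R6) : ℝ := (G1 z - Bv z)/2
def Vv2 (z : R6) : ℝ := (G2 z - Av z)/2
def mM (z : R6) : ℝ := Real.sqrt (W1 z^2 + W2 z^2)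

def bwdFun (z : R6) : (ℝ×ℝ)×(ℝ×ℝ)×(ℝ×ℝ×ℝ) :=
  ((xs z/tr z, ys z/tr z), (W1 z/mM z, W2 z/mM z), (Real.log (tr z), Vv1 z, Vv2 z))

/-! #### The forward map -/

def fwdAux (g1 g2 a b x y r : ℝ) : R6 :=
  (g1*x + g2*y + (a*y + b*(r+x))/2,
   (g1*y - g2*(r+x))/2,
   (g1*y + g2*(r-x))/2,
   (a*y + b*(r+x))/2,
   (a*y - b*(r-x))/2,
   -(a*x) + b*y + (g1*y + g2*(r-x))/2)

def mr (t : ℝ×ℝ×ℝ) : ℝ := Real.sqrt (1/Real.exp t.1 + t.2.1^2 + t.2.2^2)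

def fwdFun (ω η : ℝ×ℝ) (t : ℝ×ℝ×ℝ) : R6 :=
  fwdAux (mr t * η.1 + t.2.1) (mr t * η.2 + t.2.2) (mr t * η.2 - t.2.2)
    (mr t * η.1 - t.2.1) (Real.exp t.1 * ω.1) (Real.exp t.1 * ω.2) (Real.exp t.1)

/-! #### Entry computations for the forward map -/

lemma e11_fwdAux (g1 g2 a b x y r : ℝ) (hr : r^2 = x^2 + y^2)
    (hX : (g1*b + g2*a) * r = 1) : e11 (fwdAux g1 g2 a b x y r) = (r+x)/2 := by
  simp only [e11, fwdAux]
  linear_combination (-(g1*b+g2*a)/2) * hr + ((r+x)/2) * hX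

lemma e12_fwdAux (g1 g2 a b x y r : ℝ) (hX : (g1*b + g2*a) * r = 1) :
    e12 (fwdAux g1 g2 a b x y r) = y/2 := by
  simp only [e12, fwdAux]
  linear_combination (y/2) * hX

lemma e22_fwdAux (g1 g2 a b x y r : ℝ) (hr : r^2 = x^2 + y^2)
    (hX : (g1*b + g2*a) * r = 1) : e22 (fwdAux g1 g2 a b x y r) = (r-x)/2 := by
  simp only [e22, fwdAux]
  linear_combination (-(g1*b+g2*a)/2) * hr + ((r-x)/2) * hX

lemma hX_aux (m η1 η2 v1 v2 r : ℝ) (hr : 0 < r) (hm : m^2 = 1/r + v1^2 + v2^2)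
    (hη : η1^2+η2^2 = 1) :
    ((m*η1+v1)*(m*η1-v1) + (m*η2+v2)*(m*η2-v2)) * r = 1 := by
  have h1 : r * (1/r) = 1 := by field_simp
  linear_combination (r*(η1^2+η2^2)) * hm + (r*(1/r) + r*(v1^2+v2^2)) * hη + h1

lemma mr_sq (t : ℝ×ℝ×ℝ) : mr t ^ 2 = 1/Real.exp t.1 + t.2.1^2 + t.2.2^2 := by
  rw [mr, Real.sq_sqrt]
  positivity

lemma mr_pos (t : ℝ×ℝ×ℝ) : 0 < mr t := by
  rw [mr]
  apply Real.sqrt_pos.2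
  positivity

lemma hX_fwd (η : ℝ×ℝ) (t : ℝ×ℝ×ℝ) (hη : η.1^2+η.2^2 = 1) :
    ((mr t * η.1 + t.2.1)*(mr t * η.1 - t.2.1)
      + (mr t * η.2 + t.2.2)*(mr t * η.2 - t.2.2)) * Real.exp t.1 = 1 :=
  hX_aux _ _ _ _ _ _ (Real.exp_pos _) (mr_sq t) hη

lemma hr2_fwd (ω : ℝ×ℝ) (t : ℝ×ℝ×ℝ) (hω : ω.1^2+ω.2^2 = 1) :
    (Real.exp t.1)^2 = (Real.exp t.1 * ω.1)^2 + (Real.exp t.1 * ω.2)^2 := by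
  linear_combination (-(Real.exp t.1)^2) * hω

lemma e11_fwd (ω η : ℝ×ℝ) (t : ℝ×ℝ×ℝ) (hω : ω.1^2+ω.2^2 = 1) (hη : η.1^2+η.2^2 = 1) :
    e11 (fwdFun ω η t) = (Real.exp t.1 + Real.exp t.1 * ω.1)/2 :=
  e11_fwdAux _ _ _ _ _ _ _ (hr2_fwd ω t hω) (hX_fwd η t hη)

lemma e12_fwd (ω η : ℝ×ℝ) (t : ℝ×ℝ×ℝ) (hη : η.1^2+η.2^2 = 1) :
    e12 (fwdFun ω η t) = (Real.exp t.1 * ω.2)/2 :=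
  e12_fwdAux _ _ _ _ _ _ _ (hX_fwd η t hη)

lemma e22_fwd (ω η : ℝ×ℝ) (t : ℝ×ℝ×ℝ) (hω : ω.1^2+ω.2^2 = 1) (hη : η.1^2+η.2^2 = 1) :
    e22 (fwdFun ω η t) = (Real.exp t.1 - Real.exp t.1 * ω.1)/2 :=
  e22_fwdAux _ _ _ _ _ _ _ (hr2_fwd ω t hω) (hX_fwd η t hη)

lemma fwd_mem (ω η : ℝ×ℝ) (t : ℝ×ℝ×ℝ) (hω : ω.1^2+ω.2^2 = 1) (hη : η.1^2+η.2^2 = 1) :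
    fwdFun ω η t ∈ A1pos := by
  rw [mem_A1pos, e11_fwd ω η t hω hη, e12_fwd ω η t hη, e22_fwd ω η t hω hη]
  have hr : (0:ℝ) < Real.exp t.1 := Real.exp_pos _
  have h1 : 0 ≤ 1 + ω.1 := by nlinarith [sq_nonneg (1+ω.1), sq_nonneg ω.2]
  have h2 : 0 ≤ 1 - ω.1 := by nlinarith [sq_nonneg (1-ω.1), sq_nonneg ω.2]
  refine ⟨?_, ?_, ?_, ?_⟩
  · linear_combination (1/4 : ℝ) * hr2_fwd ω t hω
  · nlinarith [mul_nonneg hr.le h1]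
  · nlinarith [mul_nonneg hr.le h2]
  · nlinarith [hr]

/-! #### Facts about the backward map on `A1pos` -/

section bwdFacts
variable {z : R6}

lemma hdet_of_mem (hz : z ∈ A1pos) : e11 z * e22 z = e12 z ^ 2 := ((mem_A1pos z).1 hz).1

lemma htr_of_mem (hz : z ∈ A1pos) : 0 < tr z := ((mem_A1pos z).1 hz).2.2.2

lemma hr2_of_mem (hz : z ∈ A1pos) : tr z ^ 2 = xs z ^2 + ys z ^2 := by
  have h := hdet_of_mem hz
  simp only [tr, xs, ys]
  linear_combination (4:ℝ) * h

lemma hnum_of_mem (hz : z ∈ A1pos) : n1 z * (z.2.2.2.1 - z.2.2.2.2.1) + (z.2.2.1 - z.2.1) * n2 z = tr z ^ 2 := by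
  have h := hdet_of_mem hz
  obtain ⟨A, B, C, D, E, F⟩ := z
  simp only [n1, n2, pp, qq, tr, xs, ys, e11, e12, e22] at h ⊢
  linear_combination (-4 : ℝ) * h

lemma hkey_of_mem (hz : z ∈ A1pos) : (G1 z * Bv z + G2 z * Av z) * tr z = 1 := by
  have h := hnum_of_mem hz
  have ht := (htr_of_mem hz).ne'
  have key : (G1 z * Bv z + G2 z * Av z) * tr z
      = (n1 z * (z.2.2.2.1 - z.2.2.2.2.1) + (z.2.2.1 - z.2.1) * n2 z) / tr z ^ 2 := by
    rw [G1, Bv, G2, Av]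
    field_simp
  rw [key, h, div_self (pow_ne_zero 2 ht)]

lemma hWV_of_mem (hz : z ∈ A1pos) : W1 z^2 + W2 z^2 = 1/tr z + Vv1 z^2 + Vv2 z^2 := by
  have h := hkey_of_mem hz
  have ht := (htr_of_mem hz).ne'
  have h' : G1 z * Bv z + G2 z * Av z = 1/tr z := by
    field_simp
    linear_combination h
  rw [W1, W2, Vv1, Vv2]
  linear_combination h'

lemma mM_pos (hz : z ∈ A1pos) : 0 < mM z := by
  rw [mM]
  apply Real.sqrt_pos.2
  have h := hWV_of_mem hz
  have ht := htr_of_mem hz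
  nlinarith [sq_nonneg (Vv1 z), sq_nonneg (Vv2 z), one_div_pos.2 ht]

lemma mM_sq (hz : z ∈ A1pos) : mM z ^ 2 = W1 z^2 + W2 z^2 := by
  rw [mM, Real.sq_sqrt]
  positivity

/-- the six reconstruction identities -/
lemma recon_p (hz : z ∈ A1pos) : G1 z * xs z + G2 z * ys z = pp z := by
  have h := hdet_of_mem hz
  have ht := (htr_of_mem hz).ne'
  obtain ⟨A, B, C, D, E, F⟩ := z
  simp only [G1, G2, n1, pp, qq, tr, xs, ys, e11, e12, e22] at h ht ⊢
  field_simp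
  rw [div_eq_iff (pow_ne_zero 2 (by convert ht using 1; ring))]
  linear_combination (-4*(A-D)) * h

lemma recon_B (hz : z ∈ A1pos) : (G1 z * ys z - G2 z * (tr z + xs z))/2 = z.2.1 := by
  have h := hdet_of_mem hz
  have ht := (htr_of_mem hz).ne'
  obtain ⟨A, B, C, D, E, F⟩ := z
  simp only [G1, G2, n1, pp, qq, tr, xs, ys, e11, e12, e22] at h ht ⊢
  field_simp
  rw [div_eq_iff (pow_ne_zero 2 (by convert ht using 1; ring))]
  linear_combination (-4*(B+C)) * h

lemma recon_C (hz : z ∈ A1pos) : (G1 z * ys z + G2 z * (tr z - xs z))/2 = z.2.2.1 := by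
  have h := hdet_of_mem hz
  have ht := (htr_of_mem hz).ne'
  obtain ⟨A, B, C, D, E, F⟩ := z
  simp only [G1, G2, n1, pp, qq, tr, xs, ys, e11, e12, e22] at h ht ⊢
  field_simp
  rw [div_eq_iff (pow_ne_zero 2 (by convert ht using 1; ring))]
  linear_combination (-4*(B+C)) * h

lemma recon_D (hz : z ∈ A1pos) : (Av z * ys z + Bv z * (tr z + xs z))/2 = z.2.2.2.1 := by
  have h := hdet_of_mem hz
  have ht := (htr_of_mem hz).ne'
  obtain ⟨A, B, C, D, E, F⟩ := z
  simp only [Av, Bv, n2, pp, qq, tr, xs, ys, e11, e12, e22] at h ht ⊢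
  field_simp
  rw [div_eq_iff (pow_ne_zero 2 (by convert ht using 1; ring))]
  linear_combination (-4*(D+E)) * h

lemma recon_E (hz : z ∈ A1pos) : (Av z * ys z - Bv z * (tr z - xs z))/2 = z.2.2.2.2.1 := by
  have h := hdet_of_mem hz
  have ht := (htr_of_mem hz).ne'
  obtain ⟨A, B, C, D, E, F⟩ := z
  simp only [Av, Bv, n2, pp, qq, tr, xs, ys, e11, e12, e22] at h ht ⊢
  field_simp
  rw [div_eq_iff (pow_ne_zero 2 (by convert ht using 1; ring))]
  linear_combination (-4*(D+E)) * h

lemma recon_q (hz : z ∈ A1pos) : -(Av z * xs z) + Bv z * ys z = qq z := by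
  have h := hdet_of_mem hz
  have ht := (htr_of_mem hz).ne'
  obtain ⟨A, B, C, D, E, F⟩ := z
  simp only [Av, Bv, n2, pp, qq, tr, xs, ys, e11, e12, e22] at h ht ⊢
  field_simp
  rw [div_eq_iff (pow_ne_zero 2 (by convert ht using 1; ring))]
  linear_combination (-4*(F-C)) * h

end bwdFacts

/-! #### Membership facts for the backward map -/

lemma bwd_mem1 {z : R6} (hz : z ∈ A1pos) : (xs z/tr z)^2 + (ys z/tr z)^2 = 1 := by
  have h := hr2_of_mem hz
  have ht := (htr_of_mem hz).ne'
  field_simp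
  linear_combination -h

lemma bwd_mem2 {z : R6} (hz : z ∈ A1pos) : (W1 z/mM z)^2 + (W2 z/mM z)^2 = 1 := by
  have h := mM_sq hz
  have hm := (mM_pos hz).ne'
  field_simp
  linear_combination -h

/-! #### Round trip: backward after forward -/

lemma bwd_fwd (ω η : ℝ×ℝ) (t : ℝ×ℝ×ℝ) (hω : ω.1^2+ω.2^2 = 1) (hη : η.1^2+η.2^2 = 1) :
    bwdFun (fwdFun ω η t) = (ω, η, t) := by
  have he11 := e11_fwd ω η t hω hη
  have he12 := e12_fwd ω η t hη
  have he22 := e22_fwd ω η t hω hη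
  have hrne : Real.exp t.1 ≠ 0 := (Real.exp_pos _).ne'
  have hmne : mr t ≠ 0 := (mr_pos t).ne'
  have htr : tr (fwdFun ω η t) = Real.exp t.1 := by rw [tr, he11, he22]; ring
  have hxs : xs (fwdFun ω η t) = Real.exp t.1 * ω.1 := by rw [xs, he11, he22]; ring
  have hys : ys (fwdFun ω η t) = Real.exp t.1 * ω.2 := by rw [ys, he12]; ring
  have hn1 : n1 (fwdFun ω η t) = (mr t * η.1 + t.2.1) * Real.exp t.1 ^ 2 := by
    rw [n1, hxs, hys]
    simp only [pp, fwdFun, fwdAux]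
    linear_combination ((mr t * η.1 + t.2.1) * Real.exp t.1 ^ 2) * hω
  have hn2 : n2 (fwdFun ω η t) = (mr t * η.2 - t.2.2) * Real.exp t.1 ^ 2 := by
    rw [n2, hxs, hys]
    simp only [qq, fwdFun, fwdAux]
    linear_combination ((mr t * η.2 - t.2.2) * Real.exp t.1 ^ 2) * hω
  have hG1 : G1 (fwdFun ω η t) = mr t * η.1 + t.2.1 := by
    rw [G1, hn1, htr]; field_simp
  have hAv : Av (fwdFun ω η t) = mr t * η.2 - t.2.2 := by
    rw [Av, hn2, htr]; field_simp
  have hG2 : G2 (fwdFun ω η t) = mr t * η.2 + t.2.2 := by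
    rw [G2, htr]
    have hnum : (fwdFun ω η t).2.2.1 - (fwdFun ω η t).2.1
        = (mr t * η.2 + t.2.2) * Real.exp t.1 := by
      simp only [fwdFun, fwdAux]; ring
    rw [hnum]; field_simp
  have hBv : Bv (fwdFun ω η t) = mr t * η.1 - t.2.1 := by
    rw [Bv, htr]
    have hnum : (fwdFun ω η t).2.2.2.1 - (fwdFun ω η t).2.2.2.2.1
        = (mr t * η.1 - t.2.1) * Real.exp t.1 := by
      simp only [fwdFun, fwdAux]; ring
    rw [hnum]; field_simp
  have hW1 : W1 (fwdFun ω η t) = mr t * η.1 := by rw [W1, hG1, hBv]; ring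
  have hW2 : W2 (fwdFun ω η t) = mr t * η.2 := by rw [W2, hG2, hAv]; ring
  have hV1 : Vv1 (fwdFun ω η t) = t.2.1 := by rw [Vv1, hG1, hBv]; ring
  have hV2 : Vv2 (fwdFun ω η t) = t.2.2 := by rw [Vv2, hG2, hAv]; ring
  have hmM : mM (fwdFun ω η t) = mr t := by
    rw [mM, hW1, hW2]
    have : (mr t * η.1)^2 + (mr t * η.2)^2 = mr t ^2 := by
      linear_combination (mr t ^2) * hη
    rw [this, Real.sqrt_sq (mr_pos t).le]
  rw [bwdFun, htr, hxs, hys, hW1, hW2, hV1, hV2, hmM, Real.log_exp]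
  rw [mul_div_cancel_left₀ _ hrne, mul_div_cancel_left₀ _ hrne,
    mul_div_cancel_left₀ _ hmne, mul_div_cancel_left₀ _ hmne]

/-! #### Round trip: forward after backward -/

lemma fwd_bwd {z : R6} (hz : z ∈ A1pos) :
    fwdFun (xs z/tr z, ys z/tr z) (W1 z/mM z, W2 z/mM z) (Real.log (tr z), Vv1 z, Vv2 z) = z := by
  have ht := htr_of_mem hz
  have hm := mM_pos hz
  have hexp : Real.exp (Real.log (tr z)) = tr z := Real.exp_log ht
  have hmr : mr (Real.log (tr z), Vv1 z, Vv2 z) = mM z := by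
    rw [mr]
    simp only
    rw [hexp, mM]
    congr 1
    linear_combination -(hWV_of_mem hz)
  rw [fwdFun]
  simp only
  rw [hexp, hmr]
  have hg1 : mM z * (W1 z / mM z) + Vv1 z = G1 z := by
    rw [mul_div_cancel₀ _ hm.ne', W1, Vv1]; ring
  have hb : mM z * (W1 z / mM z) - Vv1 z = Bv z := by
    rw [mul_div_cancel₀ _ hm.ne', W1, Vv1]; ring
  have hg2 : mM z * (W2 z / mM z) + Vv2 z = G2 z := by
    rw [mul_div_cancel₀ _ hm.ne', W2, Vv2]; ring
  have ha : mM z * (W2 z / mM z) - Vv2 z = Av z := by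
    rw [mul_div_cancel₀ _ hm.ne', W2, Vv2]; ring
  have hx : tr z * (xs z / tr z) = xs z := mul_div_cancel₀ _ ht.ne'
  have hy : tr z * (ys z / tr z) = ys z := mul_div_cancel₀ _ ht.ne'
  rw [hg1, hb, hg2, ha, hx, hy]
  have h1 := recon_p hz
  have h2 := recon_B hz
  have h3 := recon_C hz
  have h4 := recon_D hz
  have h5 := recon_E hz
  have h6 := recon_q hz
  rw [pp] at h1
  rw [qq] at h6
  rw [fwdAux]
  obtain ⟨A, B, C, D, E, F⟩ := z
  simp only at h1 h2 h3 h4 h5 h6 ⊢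
  simp only [Prod.mk.injEq]
  refine ⟨?_, ?_, ?_, ?_, ?_, ?_⟩
  · linear_combination h1 + h4
  · linear_combination h2
  · linear_combination h3
  · linear_combination h4
  · linear_combination h5
  · linear_combination h6 + h3



/-! #### Continuity lemmas -/

lemma cont_e11 : Continuous e11 := by unfold e11; fun_prop
lemma cont_e12 : Continuous e12 := by unfold e12; fun_prop
lemma cont_e22 : Continuous e22 := by unfold e22; fun_prop
lemma cont_tr : Continuous tr := by unfold tr e11 e22; fun_prop
lemma cont_xs : Continuous xs := by unfold xs e11 e22; fun_prop
lemma cont_ys : Continuous ys := by unfold ys e12; fun_prop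
lemma cont_n1 : Continuous n1 := by unfold n1 pp xs ys e11 e12 e22; fun_prop
lemma cont_n2 : Continuous n2 := by unfold n2 qq xs ys e11 e12 e22; fun_prop

/-! #### The homeomorphism -/

def theHomeo : ↥A1pos ≃ₜ (↥unitCircle × ↥unitCircle × (ℝ × ℝ × ℝ)) where
  toFun z := (⟨(bwdFun z.1).1, bwd_mem1 z.2⟩, ⟨(bwdFun z.1).2.1, bwd_mem2 z.2⟩, (bwdFun z.1).2.2)
  invFun p := ⟨fwdFun p.1.1 p.2.1.1 p.2.2, fwd_mem _ _ _ p.1.2 p.2.1.2⟩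
  left_inv z := Subtype.ext (fwd_bwd z.2)
  right_inv p := by
    obtain ⟨⟨ω, hω⟩, ⟨η, hη⟩, t⟩ := p
    have h := bwd_fwd ω η t hω hη
    refine Prod.ext (Subtype.ext ?_) (Prod.ext (Subtype.ext ?_) ?_)
    · exact congrArg Prod.fst h
    · exact congrArg (fun w => w.2.1) h
    · exact congrArg (fun w => w.2.2) h
  continuous_toFun := by
    have hv : Continuous (fun z : ↥A1pos => (z : R6)) := continuous_subtype_val
    have ctr : Continuous fun z : ↥A1pos => tr z.1 := cont_tr.comp hv
    have hne : ∀ z : ↥A1pos, tr z.1 ≠ 0 := fun z => (htr_of_mem z.2).ne'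
    have hne2 : ∀ z : ↥A1pos, tr z.1 ^ 2 ≠ 0 := fun z => pow_ne_zero 2 (hne z)
    have hmne : ∀ z : ↥A1pos, mM z.1 ≠ 0 := fun z => (mM_pos z.2).ne'
    have cxs : Continuous fun z : ↥A1pos => xs z.1 := cont_xs.comp hv
    have cys : Continuous fun z : ↥A1pos => ys z.1 := cont_ys.comp hv
    have cG1 : Continuous fun z : ↥A1pos => G1 z.1 := by
      simp only [G1]
      exact (cont_n1.comp hv).div (ctr.pow 2) hne2
    have cG2 : Continuous fun z : ↥A1pos => G2 z.1 := by
      simp only [G2]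
      exact (by fun_prop : Continuous fun z : ↥A1pos => (z.1.2.2.1 - z.1.2.1)).div ctr hne
    have cBv : Continuous fun z : ↥A1pos => Bv z.1 := by
      simp only [Bv]
      exact (by fun_prop : Continuous fun z : ↥A1pos => (z.1.2.2.2.1 - z.1.2.2.2.2.1)).div ctr hne
    have cAv : Continuous fun z : ↥A1pos => Av z.1 := by
      simp only [Av]
      exact (cont_n2.comp hv).div (ctr.pow 2) hne2
    have cW1 : Continuous fun z : ↥A1pos => W1 z.1 := by
      simp only [W1]; exact (cG1.add cBv).div_const 2
    have cW2 : Continuous fun z : ↥A1pos => W2 z.1 := by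
      simp only [W2]; exact (cG2.add cAv).div_const 2
    have cV1 : Continuous fun z : ↥A1pos => Vv1 z.1 := by
      simp only [Vv1]; exact (cG1.sub cBv).div_const 2
    have cV2 : Continuous fun z : ↥A1pos => Vv2 z.1 := by
      simp only [Vv2]; exact (cG2.sub cAv).div_const 2
    have cmM : Continuous fun z : ↥A1pos => mM z.1 := by
      simp only [mM]
      exact Real.continuous_sqrt.comp ((cW1.pow 2).add (cW2.pow 2))
    simp only [bwdFun]
    refine Continuous.prodMk ?_ (Continuous.prodMk ?_ ?_)
    · exact (Continuous.prodMk (cxs.div ctr hne) (cys.div ctr hne)).subtype_mk _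
    · exact (Continuous.prodMk (cW1.div cmM hmne) (cW2.div cmM hmne)).subtype_mk _
    · exact Continuous.prodMk (ctr.log hne) (Continuous.prodMk cV1 cV2)
  continuous_invFun := by
    have cω1 : Continuous fun p : ↥unitCircle × ↥unitCircle × (ℝ × ℝ × ℝ) =>
        (p.1 : ℝ × ℝ).1 := continuous_fst.comp (continuous_subtype_val.comp continuous_fst)
    have cω2 : Continuous fun p : ↥unitCircle × ↥unitCircle × (ℝ × ℝ × ℝ) =>
        (p.1 : ℝ × ℝ).2 := continuous_snd.comp (continuous_subtype_val.comp continuous_fst)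
    have cη1 : Continuous fun p : ↥unitCircle × ↥unitCircle × (ℝ × ℝ × ℝ) =>
        (p.2.1 : ℝ × ℝ).1 :=
      continuous_fst.comp (continuous_subtype_val.comp (continuous_fst.comp continuous_snd))
    have cη2 : Continuous fun p : ↥unitCircle × ↥unitCircle × (ℝ × ℝ × ℝ) =>
        (p.2.1 : ℝ × ℝ).2 :=
      continuous_snd.comp (continuous_subtype_val.comp (continuous_fst.comp continuous_snd))
    have ct1 : Continuous fun p : ↥unitCircle × ↥unitCircle × (ℝ × ℝ × ℝ) =>
        p.2.2.1 := continuous_fst.comp (continuous_snd.comp continuous_snd)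
    have ct21 : Continuous fun p : ↥unitCircle × ↥unitCircle × (ℝ × ℝ × ℝ) =>
        p.2.2.2.1 := by fun_prop
    have ct22 : Continuous fun p : ↥unitCircle × ↥unitCircle × (ℝ × ℝ × ℝ) =>
        p.2.2.2.2 := by fun_prop
    have cexp : Continuous fun p : ↥unitCircle × ↥unitCircle × (ℝ × ℝ × ℝ) =>
        Real.exp p.2.2.1 := Real.continuous_exp.comp ct1
    have cmr : Continuous fun p : ↥unitCircle × ↥unitCircle × (ℝ × ℝ × ℝ) =>
        mr p.2.2 := by
      simp only [mr]
      exact Real.continuous_sqrt.comp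
        (((continuous_const.div cexp fun p => (Real.exp_pos _).ne').add (ct21.pow 2)).add
          (ct22.pow 2))
    have cg1 : Continuous fun p : ↥unitCircle × ↥unitCircle × (ℝ × ℝ × ℝ) =>
        mr p.2.2 * (p.2.1 : ℝ × ℝ).1 + p.2.2.2.1 := (cmr.mul cη1).add ct21
    have cg2 : Continuous fun p : ↥unitCircle × ↥unitCircle × (ℝ × ℝ × ℝ) =>
        mr p.2.2 * (p.2.1 : ℝ × ℝ).2 + p.2.2.2.2 := (cmr.mul cη2).add ct22
    have ca : Continuous fun p : ↥unitCircle × ↥unitCircle × (ℝ × ℝ × ℝ) =>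
        mr p.2.2 * (p.2.1 : ℝ × ℝ).2 - p.2.2.2.2 := (cmr.mul cη2).sub ct22
    have cb : Continuous fun p : ↥unitCircle × ↥unitCircle × (ℝ × ℝ × ℝ) =>
        mr p.2.2 * (p.2.1 : ℝ × ℝ).1 - p.2.2.2.1 := (cmr.mul cη1).sub ct21
    have cx : Continuous fun p : ↥unitCircle × ↥unitCircle × (ℝ × ℝ × ℝ) =>
        Real.exp p.2.2.1 * (p.1 : ℝ × ℝ).1 := cexp.mul cω1
    have cy : Continuous fun p : ↥unitCircle × ↥unitCircle × (ℝ × ℝ × ℝ) =>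
        Real.exp p.2.2.1 * (p.1 : ℝ × ℝ).2 := cexp.mul cω2
    refine Continuous.subtype_mk ?_ _
    simp only [fwdFun, fwdAux]
    refine Continuous.prodMk ?_ (Continuous.prodMk ?_ (Continuous.prodMk ?_
      (Continuous.prodMk ?_ (Continuous.prodMk ?_ ?_))))
    · exact ((cg1.mul cx).add (cg2.mul cy)).add
        (((ca.mul cy).add (cb.mul (cexp.add cx))).div_const 2)
    · exact ((cg1.mul cy).sub (cg2.mul (cexp.add cx))).div_const 2
    · exact ((cg1.mul cy).add (cg2.mul (cexp.sub cx))).div_const 2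
    · exact ((ca.mul cy).add (cb.mul (cexp.add cx))).div_const 2
    · exact ((ca.mul cy).sub (cb.mul (cexp.sub cx))).div_const 2
    · exact ((ca.mul cx).neg.add (cb.mul cy)).add
        (((cg1.mul cy).add (cg2.mul (cexp.sub cx))).div_const 2)

end

end A1posProof

theorem stmt_5 : Nonempty (A1pos ≃ₜ unitCircle × unitCircle × (ℝ × ℝ × ℝ)) :=
  ⟨A1posProof.theHomeo⟩
end

section
/- Let Γ be the Christoffel symbols of the model ℳ₁¹ = ℳ(−1,0,1,0,0,2), i.e., Γ₁₁¹ = −1, Γ₁₂¹ = Γ₂₁¹ = 1, Γ₂₂² = 2, and all other symbols zero. If T ∈ GL(2,ℝ) satisfies (T·Γ)ᵢⱼᵏ = Γᵢⱼᵏ for all i,j,k, then T is the identity matrix. That is, the isotropy group of ℳ₁¹ is trivial. -/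
open Matrix

/-- The Christoffel symbols of the Type A model `ℳ(a,b,c,d,e,f)`:
`christoffel a b c d e f i j k` is `Γ_{ij}{}^k` (indices `0,1` for `1,2`). -/
def christoffel (a b c d e f : ℝ) : Fin 2 → Fin 2 → Fin 2 → ℝ :=
  ![![![a, b], ![c, d]], ![![c, d], ![e, f]]]

/-- The action of `T ∈ GL(2,ℝ)` on constant Christoffel symbols:
`(T·Γ)ᵢⱼᵏ = Σ_{l,m,n} Tᵏ_l Γ_{mn}{}^l (T⁻¹)^m_i (T⁻¹)^n_j`. -/
noncomputable def glAct (T : GL (Fin 2) ℝ) (Γ : Fin 2 → Fin 2 → Fin 2 → ℝ) :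
    Fin 2 → Fin 2 → Fin 2 → ℝ := fun i j k =>
  ∑ l : Fin 2, ∑ m : Fin 2, ∑ n : Fin 2,
    (T : Matrix (Fin 2) (Fin 2) ℝ) k l * Γ m n l *
    ((T⁻¹ : GL (Fin 2) ℝ) : Matrix (Fin 2) (Fin 2) ℝ) m i *
    ((T⁻¹ : GL (Fin 2) ℝ) : Matrix (Fin 2) (Fin 2) ℝ) n j

theorem stmt_6 (T : GL (Fin 2) ℝ)
    (h : glAct T (christoffel (-1) 0 1 0 0 2) = christoffel (-1) 0 1 0 0 2) :
    T = 1 := by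
  have e1 := congrFun (congrFun (congrFun h 0) 0) 0
  have e2 := congrFun (congrFun (congrFun h 0) 1) 0
  have e4 := congrFun (congrFun (congrFun h 0) 0) 1
  have e5 := congrFun (congrFun (congrFun h 0) 1) 1
  have e6 := congrFun (congrFun (congrFun h 1) 1) 1
  simp only [glAct, christoffel, Fin.sum_univ_two, Matrix.cons_val_zero,
    Matrix.cons_val_one, Matrix.head_cons, Matrix.head_fin_const] at e1 e2 e4 e5 e6
  have hAB : (T : Matrix (Fin 2) (Fin 2) ℝ) * ((T⁻¹ : GL (Fin 2) ℝ) : Matrix (Fin 2) (Fin 2) ℝ) = 1 := T.mul_inv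
  have hBA : ((T⁻¹ : GL (Fin 2) ℝ) : Matrix (Fin 2) (Fin 2) ℝ) * (T : Matrix (Fin 2) (Fin 2) ℝ) = 1 := T.inv_mul
  have h1 := congrFun (congrFun hAB 0) 0
  have h2 := congrFun (congrFun hAB 0) 1
  have h3 := congrFun (congrFun hAB 1) 0
  have h4 := congrFun (congrFun hAB 1) 1
  have h5 := congrFun (congrFun hBA 0) 0
  simp only [Matrix.mul_apply, Fin.sum_univ_two, Matrix.one_apply_eq, Matrix.one_apply_ne,
    ne_eq, Fin.zero_eq_one_iff, Fin.one_eq_zero_iff, OfNat.ofNat_ne_one, not_false_iff,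
    one_ne_zero, Matrix.one_apply] at h1 h2 h3 h4 h5
  set a := (T : Matrix (Fin 2) (Fin 2) ℝ) 0 0 with ha'
  set b := (T : Matrix (Fin 2) (Fin 2) ℝ) 0 1 with hb'
  set c := (T : Matrix (Fin 2) (Fin 2) ℝ) 1 0 with hc'
  set d := (T : Matrix (Fin 2) (Fin 2) ℝ) 1 1 with hd'
  set p := ((T⁻¹ : GL (Fin 2) ℝ) : Matrix (Fin 2) (Fin 2) ℝ) 0 0 with hp'
  set q := ((T⁻¹ : GL (Fin 2) ℝ) : Matrix (Fin 2) (Fin 2) ℝ) 0 1 with hq'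
  set r := ((T⁻¹ : GL (Fin 2) ℝ) : Matrix (Fin 2) (Fin 2) ℝ) 1 0 with hr'
  set s := ((T⁻¹ : GL (Fin 2) ℝ) : Matrix (Fin 2) (Fin 2) ℝ) 1 1 with hs'
  have hdpr : d * p * r = 0 := by linear_combination e4 + (p - 2*r) * h3
  have hF5 : d * r * q + r = 0 := by linear_combination e5 - (s - q) * h3 - r * h4
  have hr0 : r = 0 := by
    by_contra hr
    rcases mul_eq_zero.mp hdpr with hdp | hr2
    · rcases mul_eq_zero.mp hdp with hd0 | hp0
      · exact hr (by linear_combination hF5 - q*r*hd0)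
      · have hdr : d * r = 0 := by linear_combination h3 - c * hp0
        exact hr (by linear_combination hF5 - q * hdr)
    · exact hr hr2
  have hp1 : p = 1 := by linear_combination -e1 + (2*r - p)*h1 + (b*p + 2)*hr0
  have hc0 : c = 0 := by linear_combination h3 - d*hr0 - c*hp1
  have hs1 : s = 1 := by linear_combination e6/2 - s*h4 + (q^2/2)*hc0
  have hd1 : d = 1 := by linear_combination h4 - q*hc0 - d*hs1
  have ha1 : a = 1 := by linear_combination h5 - a*hp1 - q*hc0
  have hq0 : q = 0 := by
    linear_combination -e2 + (p*s - q*p)*ha1 + (s - q)*hp1 + hs1 + (a*q + 2*b*s)*hr0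
  have hb0 : b = 0 := by linear_combination h2 - a*hq0 - b*hs1
  have hA : (T : Matrix (Fin 2) (Fin 2) ℝ) = 1 := by
    ext i j
    fin_cases i <;> fin_cases j <;>
      simp [Matrix.one_apply, ← ha', ← hb', ← hc', ← hd', ha1, hb0, hc0, hd1]
  exact Units.ext (by simpa using hA)
end

section
/- Let c ∈ ℝ with c ∉ {0, −1, −1/2}, and let Γ be the Christoffel symbols of the model ℳ₂¹(c) = ℳ(−1,0,c,0,0,1+2c), i.e., Γ₁₁¹ = −1, Γ₁₂¹ = Γ₂₁¹ = c, Γ₂₂² = 1+2c, and all other symbols zero. If T ∈ GL(2,ℝ) satisfies (T·Γ)ᵢⱼᵏ = Γᵢⱼᵏ for all i,j,k, then T is the identity matrix. -/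
open Matrix

theorem stmt_7 (c : ℝ) (hc : c ∉ ({0, -1, -1/2} : Set ℝ)) (T : GL (Fin 2) ℝ)
    (h : glAct T (christoffel (-1) 0 c 0 0 (1 + 2*c)) =
      christoffel (-1) 0 c 0 0 (1 + 2*c)) :
    T = 1 := by
  simp only [Set.mem_insert_iff, Set.mem_singleton_iff, not_or] at hc
  obtain ⟨hc0, hc1, hc2⟩ := hc
  have hc3 : 1 + 2*c ≠ 0 := by
    intro hx; apply hc2; linarith
  have h000 := congrFun (congrFun (congrFun h 0) 0) 0
  have h001 := congrFun (congrFun (congrFun h 0) 0) 1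
  have h010 := congrFun (congrFun (congrFun h 0) 1) 0
  have h011 := congrFun (congrFun (congrFun h 0) 1) 1
  have h110 := congrFun (congrFun (congrFun h 1) 1) 0
  have h111 := congrFun (congrFun (congrFun h 1) 1) 1
  simp [glAct, christoffel, Fin.sum_univ_two] at h000 h001 h010 h011 h110 h111
  have hNM : ((T⁻¹ : GL (Fin 2) ℝ) : Matrix (Fin 2) (Fin 2) ℝ) * (T : Matrix (Fin 2) (Fin 2) ℝ) = 1 := by
    rw [← Units.val_mul, inv_mul_cancel]; rfl
  have nm00 := congrFun (congrFun hNM 0) 0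
  have nm01 := congrFun (congrFun hNM 0) 1
  have nm10 := congrFun (congrFun hNM 1) 0
  have nm11 := congrFun (congrFun hNM 1) 1
  simp [Matrix.mul_apply, Fin.sum_univ_two] at nm00 nm01 nm10 nm11
  set p := ((T : Matrix (Fin 2) (Fin 2) ℝ))⁻¹ 0 0 with hp
  set q := ((T : Matrix (Fin 2) (Fin 2) ℝ))⁻¹ 0 1 with hq
  set r := ((T : Matrix (Fin 2) (Fin 2) ℝ))⁻¹ 1 0 with hr
  set s := ((T : Matrix (Fin 2) (Fin 2) ℝ))⁻¹ 1 1 with hs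
  have E1 : -p^2 + 2*c*p*r = -p := by
    linear_combination p*h000 + q*h001 - (-p^2+2*c*p*r)*nm00 - ((1+2*c)*r^2)*nm01
  have E2 : (1+2*c)*r^2 = -r := by
    linear_combination r*h000 + s*h001 - (-p^2+2*c*p*r)*nm10 - ((1+2*c)*r^2)*nm11
  have E3 : -p*q + c*(p*s + r*q) = c*p := by
    linear_combination p*h010 + q*h011 - (-p*q + c*(p*s+r*q))*nm00 - ((1+2*c)*r*s)*nm01
  have E4 : (1+2*c)*r*s = c*r := by
    linear_combination r*h010 + s*h011 - (-p*q + c*(p*s+r*q))*nm10 - ((1+2*c)*r*s)*nm11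
  have E5 : -q^2 + 2*c*q*s = (1+2*c)*q := by
    linear_combination p*h110 + q*h111 - (-q^2+2*c*q*s)*nm00 - ((1+2*c)*s^2)*nm01
  have E6 : (1+2*c)*s^2 = (1+2*c)*s := by
    linear_combination r*h110 + s*h111 - (-q^2+2*c*q*s)*nm10 - ((1+2*c)*s^2)*nm11
  -- s = 0 or s = 1
  have hss : s = 0 ∨ s = 1 := by
    rcases mul_eq_zero.mp (show (1+2*c) * (s * (s - 1)) = 0 by linear_combination E6) with h' | h'
    · exact absurd h' hc3
    · rcases mul_eq_zero.mp h' with h'' | h''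
      · exact Or.inl h''
      · exact Or.inr (by linarith)
  -- r = 0
  have hr0 : r = 0 := by
    by_contra hrne
    have hA : (1+2*c)*r = -1 := by
      have := mul_right_cancel₀ hrne (show ((1+2*c)*r) * r = (-1) * r by linear_combination E2)
      exact this
    have hB : (1+2*c)*s = c := by
      have := mul_right_cancel₀ hrne (show ((1+2*c)*s) * r = c * r by linear_combination E4)
      exact this
    rcases hss with h' | h'
    · rw [h'] at hB; simp at hB; exact hc0 hB.symm
    · rw [h'] at hB; apply hc1; linarith
  -- s = 1
  have hs1 : s = 1 := by
    rcases hss with h' | h'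
    · exfalso; rw [hr0, h'] at nm11; simp at nm11
    · exact h'
  -- M 1 0 = 0
  have hM10 : (T : Matrix (Fin 2) (Fin 2) ℝ) 1 0 = 0 := by
    rw [hr0, hs1] at nm10; simpa using nm10
  have hp0 : p ≠ 0 := by
    intro h'
    rw [h', hM10] at nm00; simp at nm00
  have hp1 : p = 1 := by
    have : p * p = 1 * p := by rw [hr0] at E1; linear_combination -E1
    exact mul_right_cancel₀ hp0 this
  have hq0 : q = 0 := by
    rw [hp1, hr0, hs1] at E3
    linarith [E3]
  have hNinv : ((T : Matrix (Fin 2) (Fin 2) ℝ))⁻¹ = 1 := by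
    ext i j
    fin_cases i <;> fin_cases j <;>
      simp [← hp, ← hq, ← hr, ← hs, hp1, hq0, hr0, hs1]
  have hTinv : (T⁻¹ : GL (Fin 2) ℝ) = 1 := by
    apply Units.ext
    rw [Matrix.coe_units_inv, Units.val_one]
    exact hNinv
  calc T = (T⁻¹)⁻¹ := (inv_inv T).symm
    _ = 1 := by rw [hTinv]; simp
end

section
/- Let Γ be the Christoffel symbols of the model ℳ₂¹(−1/2) = ℳ(−1,0,−1/2,0,0,0), i.e., Γ₁₁¹ = −1, Γ₁₂¹ = Γ₂₁¹ = −1/2, and all other symbols zero. Then a matrix T ∈ GL(2,ℝ) satisfies (T·Γ)ᵢⱼᵏ = Γᵢⱼᵏ for all i,j,k if and only if T is the identity or T is the matrix of the linear map T(x¹,x²) = (x¹ + x², −x²). -/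
open Matrix

theorem stmt_8 (T : GL (Fin 2) ℝ) :
    glAct T (christoffel (-1) 0 (-1/2) 0 0 0) = christoffel (-1) 0 (-1/2) 0 0 0 ↔
      (T : Matrix (Fin 2) (Fin 2) ℝ) = 1 ∨
      (T : Matrix (Fin 2) (Fin 2) ℝ) = !![1, 1; 0, -1] := by
  have hMN : (T : Matrix (Fin 2) (Fin 2) ℝ) * ((T⁻¹ : GL (Fin 2) ℝ) : Matrix (Fin 2) (Fin 2) ℝ) = 1 := by
    rw [← Units.val_mul, mul_inv_cancel, Units.val_one]
  have hNM : ((T⁻¹ : GL (Fin 2) ℝ) : Matrix (Fin 2) (Fin 2) ℝ) * (T : Matrix (Fin 2) (Fin 2) ℝ) = 1 := by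
    rw [← Units.val_mul, inv_mul_cancel, Units.val_one]
  constructor
  · intro h
    have m00 := congrFun (congrFun hMN 0) 0
    have m10 := congrFun (congrFun hMN 1) 0
    have m11 := congrFun (congrFun hMN 1) 1
    have n01 := congrFun (congrFun hNM 0) 1
    have e000 := congrFun (congrFun (congrFun h 0) 0) 0
    have e001 := congrFun (congrFun (congrFun h 0) 0) 1
    have e010 := congrFun (congrFun (congrFun h 0) 1) 0
    have e110 := congrFun (congrFun (congrFun h 1) 1) 0
    simp [glAct, christoffel, Fin.sum_univ_two, Matrix.mul_apply] at m00 m10 m11 n01 e000 e001 e010 e110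
    set a := (T : Matrix (Fin 2) (Fin 2) ℝ) 0 0 with ha
    set b := (T : Matrix (Fin 2) (Fin 2) ℝ) 0 1 with hb
    set c := (T : Matrix (Fin 2) (Fin 2) ℝ) 1 0 with hc
    set d := (T : Matrix (Fin 2) (Fin 2) ℝ) 1 1 with hd
    set p := ((T : Matrix (Fin 2) (Fin 2) ℝ))⁻¹ 0 0 with hp
    set q := ((T : Matrix (Fin 2) (Fin 2) ℝ))⁻¹ 0 1 with hq
    set r := ((T : Matrix (Fin 2) (Fin 2) ℝ))⁻¹ 1 0 with hr
    set s := ((T : Matrix (Fin 2) (Fin 2) ℝ))⁻¹ 1 1 with hs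
    -- E1 : a * p * (p + r) = 1
    have E1 : a * p * (p + r) = 1 := by linear_combination -e000
    have E2 : c * (p * (p + r)) = 0 := by linear_combination -e001
    have hc0 : c = 0 := by
      rcases mul_eq_zero.mp E2 with h' | h'
      · exact h'
      · exfalso; rw [mul_assoc, h', mul_zero] at E1; norm_num at E1
    have hd0 : d * s = 1 := by linear_combination m11 - q * hc0
    have hr0 : r = 0 := by
      have hdr : d * r = 0 := by linear_combination m10 - p * hc0
      rcases mul_eq_zero.mp hdr with h' | h'
      · exfalso; rw [h', zero_mul] at hd0; norm_num at hd0
      · exact h'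
    have hap : a * p = 1 := by linear_combination m00 - b * hr0
    have hp1 : p = 1 := by linear_combination E1 - p * m00 - (a * p - b * p) * hr0
    have ha1 : a = 1 := by linear_combination hap - a * hp1
    have E3 : 2 * q + s = 1 := by
      linear_combination -2 * e010 - 2 * (p * q + (1/2) * (p * s + r * q)) * ha1
        - 2 * (q + (1/2) * s) * hp1 - q * hr0
    have E4 : q * (q + s) = 0 := by
      linear_combination -e110 - (q * (q + s)) * ha1
    have hbq : b = -(q * d) := by linear_combination n01 - b * hp1
    rcases mul_eq_zero.mp E4 with hq0 | hqs
    · left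
      have hs1 : s = 1 := by linarith
      have hd1 : d = 1 := by linear_combination hd0 - d * hs1
      ext i j
      fin_cases i <;> fin_cases j <;>
        simp [← ha, ← hb, ← hc, ← hd, ha1, hbq, hq0, hc0, hd1]
    · right
      have hq1 : q = 1 := by linarith
      have hs1 : s = -1 := by linarith
      have hd1 : d = -1 := by
        have hds : d * (-1) = 1 := by rw [← hs1]; exact hd0
        linarith
      ext i j
      fin_cases i <;> fin_cases j <;>
        simp [← ha, ← hb, ← hc, ← hd, ha1, hbq, hq1, hc0, hd1]
  · intro h
    rcases h with hT | hT
    · have hN : ((T⁻¹ : GL (Fin 2) ℝ) : Matrix (Fin 2) (Fin 2) ℝ) = 1 := by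
        rw [hT, one_mul] at hMN; exact hMN
      funext i j k
      fin_cases i <;> fin_cases j <;> fin_cases k <;>
        simp [glAct, christoffel, Fin.sum_univ_two, hT, hN, Matrix.one_fin_two] <;> norm_num [Matrix.one_fin_two]
    · have hsq : (!![1, 1; 0, -1] : Matrix (Fin 2) (Fin 2) ℝ) * !![1, 1; 0, -1] = 1 := by
        norm_num [Matrix.mul_fin_two, ← Matrix.one_fin_two]
      have hN : ((T⁻¹ : GL (Fin 2) ℝ) : Matrix (Fin 2) (Fin 2) ℝ) = !![1, 1; 0, -1] := by
        calc ((T⁻¹ : GL (Fin 2) ℝ) : Matrix (Fin 2) (Fin 2) ℝ)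
            = (!![1, 1; 0, -1] * !![1, 1; 0, -1]) * ((T⁻¹ : GL (Fin 2) ℝ) : Matrix (Fin 2) (Fin 2) ℝ) := by
              rw [hsq, one_mul]
          _ = !![1, 1; 0, -1] * ((T : Matrix (Fin 2) (Fin 2) ℝ) * ((T⁻¹ : GL (Fin 2) ℝ) : Matrix (Fin 2) (Fin 2) ℝ)) := by
              rw [hT, Matrix.mul_assoc]
          _ = !![1, 1; 0, -1] := by rw [hMN, mul_one]
      funext i j k
      fin_cases i <;> fin_cases j <;> fin_cases k <;>
        simp [glAct, christoffel, Fin.sum_univ_two, hT, hN, Matrix.one_fin_two] <;> norm_num [Matrix.one_fin_two]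
end

section
/- Let c ∈ ℝ with c ∉ {0, −1}, and let Γ be the Christoffel symbols of the model ℳ₃¹(c) = ℳ(0,0,c,0,0,1+2c), i.e., Γ₁₂¹ = Γ₂₁¹ = c, Γ₂₂² = 1+2c, and all other symbols zero. Then a matrix T ∈ GL(2,ℝ) satisfies (T·Γ)ᵢⱼᵏ = Γᵢⱼᵏ for all i,j,k if and only if T is a diagonal matrix diag(λ, 1) for some λ ≠ 0. -/
open Matrix

theorem stmt_9 (c : ℝ) (hc : c ∉ ({0, -1} : Set ℝ)) (T : GL (Fin 2) ℝ) :
    glAct T (christoffel 0 0 c 0 0 (1 + 2*c)) = christoffel 0 0 c 0 0 (1 + 2*c) ↔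
      ∃ l : ℝ, l ≠ 0 ∧ (T : Matrix (Fin 2) (Fin 2) ℝ) = !![l, 0; 0, 1] := by
  
  have hc0 : c ≠ 0 := by simp [Set.mem_insert_iff] at hc; tauto
  constructor
  · intro h
    obtain ⟨p, q, r, s, hM⟩ : ∃ p q r s, (T : Matrix (Fin 2) (Fin 2) ℝ) = !![p, q; r, s] :=
      ⟨_, _, _, _, Matrix.eta_fin_two _⟩
    have hdet2 : p * s - q * r ≠ 0 := by
      have h1 : (T : Matrix (Fin 2) (Fin 2) ℝ) *
          ((T⁻¹ : GL (Fin 2) ℝ) : Matrix (Fin 2) (Fin 2) ℝ) = 1 := by exact_mod_cast T.mul_inv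
      intro h0
      have := congrArg Matrix.det h1
      rw [Matrix.det_mul, hM, Matrix.det_fin_two_of, h0, zero_mul] at this
      simp at this
    have hNval : ((T⁻¹ : GL (Fin 2) ℝ) : Matrix (Fin 2) (Fin 2) ℝ) =
        (p * s - q * r)⁻¹ • !![s, -q; -r, p] := by
      rw [Matrix.GeneralLinearGroup.coe_inv, hM, Matrix.inv_def, Ring.inverse_eq_inv,
        Matrix.det_fin_two_of, Matrix.adjugate_fin_two]
      norm_num
    have G1 := congrFun (congrFun (congrFun h 0) 0) 1
    have G2 := congrFun (congrFun (congrFun h 1) 1) 0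
    have G3 := congrFun (congrFun (congrFun h 0) 1) 0
    have G4 := congrFun (congrFun (congrFun h 0) 1) 1
    simp only [glAct, christoffel, hM, hNval, Fin.sum_univ_two, Matrix.smul_apply,
      Matrix.cons_val', Matrix.cons_val_zero, Matrix.cons_val_one, Matrix.head_cons,
      Matrix.head_fin_const, Matrix.empty_val', Matrix.cons_val_fin_one,
      smul_eq_mul, Matrix.of_apply] at G1 G2 G3 G4
    field_simp at G1 G2 G3 G4
    rw [div_eq_iff (pow_ne_zero 2 (by rwa [mul_comm r q]))] at G1 G2 G3 G4
    have h4 : ((p * s - q * r) * (p * s - q * r)) * ((p * s - q * r) * (p * s - q * r)) ≠ 0 := by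
      positivity
    have hB : r * r * s = 0 := by
      have : ((p * s - q * r) * (p * s - q * r)) * ((p * s - q * r) * (p * s - q * r)) *
          (r * r * s) = 0 := by linear_combination ((p * s - q * r) * (p * s - q * r)) * ((p * s - q * r) * (p * s - q * r)) * G1
      rcases mul_eq_zero.1 this with h' | h'
      · exact absurd h' h4
      · exact h'
    have hE : p * p * q = 0 := by
      have : ((p * s - q * r) * (p * s - q * r)) * ((p * s - q * r) * (p * s - q * r)) *
          (p * p * q) = 0 := by linear_combination ((p * s - q * r) * (p * s - q * r)) * ((p * s - q * r) * (p * s - q * r)) * G2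
      rcases mul_eq_zero.1 this with h' | h'
      · exact absurd h' h4
      · exact h'
    by_cases hr : r = 0
    · subst hr
      have hp : p ≠ 0 := fun h0 => hdet2 (by rw [h0]; ring)
      have hs : s ≠ 0 := fun h0 => hdet2 (by rw [h0]; ring)
      have hq : q = 0 := by
        rcases mul_eq_zero.1 hE with h' | h'
        · exact absurd (by rcases mul_eq_zero.1 h' with h'' | h'' <;> exact h'') hp
        · exact h'
      subst hq
      have hs1 : s = 1 := by
        have h0 : c * p * p * s * (1 - s) = 0 := by linear_combination G3
        rcases mul_eq_zero.1 h0 with h' | h'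
        · exact absurd h' (mul_ne_zero (mul_ne_zero (mul_ne_zero hc0 hp) hp) hs)
        · linarith
      exact ⟨p, hp, by rw [hM, hs1]⟩
    · exfalso
      have hs : s = 0 := by
        rcases mul_eq_zero.1 hB with h' | h'
        · exact absurd (by rcases mul_eq_zero.1 h' with h'' | h'' <;> exact h'') hr
        · exact h'
      subst hs
      have hq : q ≠ 0 := fun h0 => hdet2 (by rw [h0]; ring)
      have hp : p = 0 := by
        rcases mul_eq_zero.1 hE with h' | h'
        · rcases mul_eq_zero.1 h' with h'' | h'' <;> exact h''
        · exact absurd h' hq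
      subst hp
      have : c * (q * r) * (q * r) = 0 := by linear_combination -G3
      rcases mul_eq_zero.1 this with h' | h'
      · rcases mul_eq_zero.1 h' with h'' | h''
        · exact hc0 h''
        · exact hdet2 (by rw [show q * r = 0 from h'']; ring)
      · exact hdet2 (by rw [show q * r = 0 from h']; ring)
  · rintro ⟨l, hl, hMl⟩
    have hNval : ((T⁻¹ : GL (Fin 2) ℝ) : Matrix (Fin 2) (Fin 2) ℝ) = !![l⁻¹, 0; 0, 1] := by
      rw [Matrix.GeneralLinearGroup.coe_inv, hMl]
      apply Matrix.inv_eq_right_inv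
      rw [Matrix.mul_fin_two, Matrix.one_fin_two]
      field_simp
      norm_num
    funext i j k
    fin_cases i <;> fin_cases j <;> fin_cases k <;>
      simp [glAct, christoffel, hMl, hNval, Fin.sum_univ_two] <;> field_simp
end

section
/- Let c ∈ ℝ and let Γ be the Christoffel symbols of the model ℳ₄¹(c) = ℳ(0,0,1,0,c,2), i.e., Γ₁₂¹ = Γ₂₁¹ = 1, Γ₂₂¹ = c, Γ₂₂² = 2, and all other symbols zero. If c ≠ 0, then a matrix T ∈ GL(2,ℝ) satisfies (T·Γ)ᵢⱼᵏ = Γᵢⱼᵏ for all i,j,k if and only if T is the matrix of a map T(x¹,x²) = (x¹ − w x², x²) for some w ∈ ℝ. If c = 0, then T·Γ = Γ if and only if T is the matrix of a map T(x¹,x²) = (λ(x¹ − w x²), x²) for some λ ≠ 0 and w ∈ ℝ. -/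
open Matrix

theorem stmt_10 (c : ℝ) (T : GL (Fin 2) ℝ) :
    (c ≠ 0 →
      (glAct T (christoffel 0 0 1 0 c 2) = christoffel 0 0 1 0 c 2 ↔
        ∃ w : ℝ, (T : Matrix (Fin 2) (Fin 2) ℝ) = !![1, -w; 0, 1])) ∧
    (c = 0 →
      (glAct T (christoffel 0 0 1 0 c 2) = christoffel 0 0 1 0 c 2 ↔
        ∃ l w : ℝ, l ≠ 0 ∧
          (T : Matrix (Fin 2) (Fin 2) ℝ) = !![l, -(l*w); 0, 1])) := by
  obtain ⟨p, q, r, s, hM⟩ : ∃ p q r s, (T : Matrix (Fin 2) (Fin 2) ℝ) = !![p, q; r, s] :=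
    ⟨_, _, _, _, Matrix.eta_fin_two _⟩
  have hd : p * s - q * r ≠ 0 := by
    have h : IsUnit ((T : Matrix (Fin 2) (Fin 2) ℝ)).det :=
      (Matrix.isUnit_iff_isUnit_det _).mp T.isUnit
    rw [hM, Matrix.det_fin_two_of] at h
    exact h.ne_zero
  have hS : ((T⁻¹ : GL (Fin 2) ℝ) : Matrix (Fin 2) (Fin 2) ℝ)
      = (p*s - q*r)⁻¹ • !![s, -q; -r, p] := by
    rw [Matrix.coe_units_inv, hM, Matrix.inv_def, Matrix.adjugate_fin_two,
      Matrix.det_fin_two_of, Ring.inverse_eq_inv']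
    norm_num
  have key : glAct T (christoffel 0 0 1 0 c 2) = christoffel 0 0 1 0 c 2 ↔
      (r = 0 ∧ s = 1 ∧ c * (p - 1) = 0) := by
    simp only [funext_iff, Fin.forall_fin_two]
    simp only [glAct, christoffel, hM, hS, Fin.sum_univ_two,
      Matrix.smul_apply, Matrix.cons_val', Matrix.cons_val_zero, Matrix.cons_val_one,
      Matrix.head_cons, Matrix.of_apply, Matrix.head_fin_const, smul_eq_mul,
      Matrix.empty_val', Matrix.cons_val_fin_one]
    set u := (p * s - q * r)⁻¹ with hu_def
    have h2 : ((p * s - q * r) * u) ^ 2 = 1 := by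
      rw [hu_def, mul_inv_cancel₀ hd]; ring
    constructor
    · rintro ⟨⟨⟨e1, e2⟩, e3, e4⟩, ⟨e5, e6⟩, e7, e8⟩
      have h001 : c * r ^ 3 = 0 := by
        linear_combination (p*s - q*r)^2 * e2 - c * r^3 * h2
      have h011 : r * (q*r - p*s - c*p*r) = 0 := by
        linear_combination (p*s - q*r)^2 * e4 - (r * (q*r - p*s - c*p*r)) * h2
      have h010 : p^2*s - p*q*r - c*p^2*r = (p*s - q*r)^2 := by
        linear_combination (p*s - q*r)^2 * e3 - (p^2*s - p*q*r - c*p^2*r) * h2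
      have h110 : c * p^3 = c * (p*s - q*r)^2 := by
        linear_combination (p*s - q*r)^2 * e7 - c * p^3 * h2
      have hr : r = 0 := by
        rcases eq_or_ne c 0 with hc | hc
        · subst hc
          have h5 : r * (q*r - p*s) = 0 := by linear_combination h011
          rcases mul_eq_zero.mp h5 with h | h
          · exact h
          · exact absurd (show p * s - q * r = 0 by linarith) hd
        · have h3 : r ^ 3 = 0 := by
            rcases mul_eq_zero.mp h001 with h | h
            · exact absurd h hc
            · exact h
          exact pow_eq_zero_iff (by norm_num) |>.mp h3
      subst hr
      have hp : p ≠ 0 := fun h => hd (by rw [h]; ring)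
      have hs0 : s ≠ 0 := fun h => hd (by rw [h]; ring)
      have hs : s = 1 := by
        have h5 : p ^ 2 * s * (s - 1) = 0 := by linear_combination (-1 : ℝ) * h010
        rcases mul_eq_zero.mp h5 with h | h
        · exact absurd h (mul_ne_zero (pow_ne_zero 2 hp) hs0)
        · linarith
      subst hs
      have hcp : c * (p - 1) = 0 := by
        have h5 : c * (p - 1) * p ^ 2 = 0 := by linear_combination h110
        rcases mul_eq_zero.mp h5 with h | h
        · exact h
        · exact absurd h (pow_ne_zero 2 hp)
      exact ⟨rfl, rfl, hcp⟩
    · rintro ⟨hr, hs, hc⟩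
      subst hr; subst hs
      refine ⟨⟨⟨by ring, by ring⟩, ?_, by ring⟩, ⟨?_, by ring⟩, ?_, ?_⟩
      · linear_combination h2
      · linear_combination h2
      · linear_combination c * p * h2 + hc
      · linear_combination 2 * h2
  have hp_entries : ∀ (N : Matrix (Fin 2) (Fin 2) ℝ),
      (T : Matrix (Fin 2) (Fin 2) ℝ) = N →
      p = N 0 0 ∧ q = N 0 1 ∧ r = N 1 0 ∧ s = N 1 1 := by
    intro N h
    rw [hM] at h
    exact ⟨by rw [← h]; simp, by rw [← h]; simp, by rw [← h]; simp, by rw [← h]; simp⟩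
  constructor
  · intro hc
    rw [key]
    constructor
    · rintro ⟨hr, hs, hcp⟩
      have hp1 : p = 1 := by
        rcases mul_eq_zero.mp hcp with h | h
        · exact absurd h hc
        · linarith
      exact ⟨-q, by rw [hM, hp1, hr, hs]; norm_num⟩
    · rintro ⟨w, hw⟩
      obtain ⟨h00, h01, h10, h11⟩ := hp_entries _ hw
      simp at h00 h01 h10 h11
      exact ⟨h10, h11, by rw [h00]; ring⟩
  · intro hc
    subst hc
    rw [key]
    constructor
    · rintro ⟨hr, hs, -⟩
      have hp : p ≠ 0 := fun h => hd (by rw [h, hr, hs]; ring)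
      refine ⟨p, -q / p, hp, ?_⟩
      rw [hM, hr, hs]
      congr 1
      field_simp
    · rintro ⟨l, w, hl, hw⟩
      obtain ⟨h00, h01, h10, h11⟩ := hp_entries _ hw
      simp at h00 h01 h10 h11
      exact ⟨h10, h11, by ring⟩
end

section
/- Let c ∈ ℝ and let Γ be the Christoffel symbols of the model ℳ₅¹(c) = ℳ(1,0,0,0,1+c²,2c), i.e., Γ₁₁¹ = 1, Γ₂₂¹ = 1+c², Γ₂₂² = 2c, and all other symbols zero. If c ≠ 0, then the only matrix T ∈ GL(2,ℝ) satisfying (T·Γ)ᵢⱼᵏ = Γᵢⱼᵏ for all i,j,k is the identity. If c = 0, then T·Γ = Γ if and only if T is the identity or T = diag(1, −1). -/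
set_option maxHeartbeats 1000000


open Matrix

/-- Inverse of a `GL(2,ℝ)` element, explicitly. -/
lemma inv_coe_eq (T : GL (Fin 2) ℝ) :
    ((T⁻¹ : GL (Fin 2) ℝ) : Matrix (Fin 2) (Fin 2) ℝ) =
    ((T : Matrix (Fin 2) (Fin 2) ℝ).det)⁻¹ •
      !![(T : Matrix (Fin 2) (Fin 2) ℝ) 1 1, -(T : Matrix (Fin 2) (Fin 2) ℝ) 0 1;
         -(T : Matrix (Fin 2) (Fin 2) ℝ) 1 0, (T : Matrix (Fin 2) (Fin 2) ℝ) 0 0] := by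
  rw [Matrix.coe_units_inv, Matrix.inv_def, Matrix.adjugate_fin_two, Ring.inverse_eq_inv]

/-- The forward direction: isotropy forces the matrix entries. -/
lemma forward_key (c : ℝ) (T : GL (Fin 2) ℝ)
    (h : glAct T (christoffel 1 0 0 0 (1 + c^2) (2*c)) =
          christoffel 1 0 0 0 (1 + c^2) (2*c)) :
    (T : Matrix (Fin 2) (Fin 2) ℝ) 0 0 = 1 ∧
    (T : Matrix (Fin 2) (Fin 2) ℝ) 0 1 = 0 ∧
    (T : Matrix (Fin 2) (Fin 2) ℝ) 1 0 = 0 ∧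
    ((T : Matrix (Fin 2) (Fin 2) ℝ) 1 1)^2 = 1 ∧
    c * ((T : Matrix (Fin 2) (Fin 2) ℝ) 1 1 - 1) = 0 := by
  set a := (T : Matrix (Fin 2) (Fin 2) ℝ) 0 0 with ha
  set b := (T : Matrix (Fin 2) (Fin 2) ℝ) 0 1 with hb
  set e := (T : Matrix (Fin 2) (Fin 2) ℝ) 1 0 with he
  set f := (T : Matrix (Fin 2) (Fin 2) ℝ) 1 1 with hf
  have hS := inv_coe_eq T
  have hdet : (T : Matrix (Fin 2) (Fin 2) ℝ).det = a*f - b*e := by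
    rw [Matrix.det_fin_two]
  rw [hdet] at hS
  have hD : a*f - b*e ≠ 0 := by
    rw [← hdet]; exact ((Matrix.isUnit_iff_isUnit_det _).mp T.isUnit).ne_zero
  have h1 := congrFun (congrFun (congrFun h 0) 0) 0
  have h2 := congrFun (congrFun (congrFun h 0) 1) 0
  have h3 := congrFun (congrFun (congrFun h 1) 1) 0
  have h4 := congrFun (congrFun (congrFun h 0) 0) 1
  have h5 := congrFun (congrFun (congrFun h 0) 1) 1
  have h6 := congrFun (congrFun (congrFun h 1) 1) 1
  simp only [glAct, christoffel] at h1 h2 h3 h4 h5 h6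
  simp [Fin.sum_univ_two, hS, Matrix.smul_apply, ← ha, ← hb, ← he, ← hf]
    at h1 h2 h3 h4 h5 h6
  field_simp at h1 h2 h3 h4 h5 h6
  -- clean polynomial forms
  have E1 : a*f*f + (a*(1+c^2) + 2*b*c)*(e*e) = (a*f - b*e)^2 := by
    linear_combination h1
  have E2 : a*(b*f + (a*(1+c^2) + 2*b*c)*e) = 0 := by
    have h' : (a*(b*f + (a*(1+c^2) + 2*b*c)*e)) * ((a*f - b*e)^4) = 0 := by
      linear_combination -(a*f - b*e)^4 * h2
    exact (mul_eq_zero.mp h').resolve_right (pow_ne_zero 4 hD)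
  have E3 : a*b*b + (a*(1+c^2) + 2*b*c)*(a*a) = (1+c^2)*(a*f - b*e)^2 := by
    linear_combination h3
  have E4 : e*(f*f + (e*(1+c^2) + 2*f*c)*e) = 0 := by linear_combination h4
  have E5 : e*(b*f + (e*(1+c^2) + 2*f*c)*a) = 0 := by
    have h' : (e*(b*f + (e*(1+c^2) + 2*f*c)*a)) * ((a*f - b*e)^4) = 0 := by
      linear_combination -(a*f - b*e)^4 * h5
    exact (mul_eq_zero.mp h').resolve_right (pow_ne_zero 4 hD)
  have E6 : e*b*b + (e*(1+c^2) + 2*f*c)*(a*a) = 2*c*(a*f - b*e)^2 := by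
    linear_combination h6
  -- Step 1 : e = 0
  have he0 : e = 0 := by
    by_contra hne
    have hff : f*f + (e*(1+c^2) + 2*f*c)*e = 0 :=
      (mul_eq_zero.mp E4).resolve_left hne
    have hbf : b*f + (e*(1+c^2) + 2*f*c)*a = 0 :=
      (mul_eq_zero.mp E5).resolve_left hne
    have hf0 : f = 0 := by
      have hfd : f * (a*f - b*e) = 0 := by linear_combination a * hff - e * hbf
      exact (mul_eq_zero.mp hfd).resolve_right hD
    rw [hf0] at hff
    have : e * e * (1 + c^2) = 0 := by linear_combination hff
    have h1c : (0:ℝ) < 1 + c^2 := by positivity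
    have := mul_eq_zero.mp this
    rcases this with h' | h'
    · exact hne ((mul_self_eq_zero).mp h')
    · linarith
  rw [he0] at E1 E2 E3 E6 hD
  have ha0 : a ≠ 0 := fun h' => hD (by rw [h']; ring)
  have hf0 : f ≠ 0 := fun h' => hD (by rw [h']; ring)
  -- Step 2 : b = 0
  have hb0 : b = 0 := by
    have : a * (b * f) = 0 := by linear_combination E2
    rcases mul_eq_zero.mp this with h' | h'
    · exact absurd h' ha0
    · exact (mul_eq_zero.mp h').resolve_right hf0
  rw [hb0] at E1 E3 E6 hD
  -- Step 3 : a = 1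
  have ha1 : a = 1 := by
    have : a * (f * f) * (a - 1) = 0 := by linear_combination -E1
    have := (mul_eq_zero.mp this).resolve_left (by
      intro h'
      rcases mul_eq_zero.mp h' with h'' | h''
      · exact ha0 h''
      · exact hf0 ((mul_self_eq_zero).mp h''))
    linarith
  rw [ha1] at E3 E6
  -- Step 4 : f^2 = 1
  have hf2 : f^2 = 1 := by
    have h1c : (1:ℝ) + c^2 ≠ 0 := by positivity
    have : (1+c^2) * (f^2 - 1) = 0 := by linear_combination -E3
    have := (mul_eq_zero.mp this).resolve_left h1c
    linarith
  -- Step 5 : c * (f - 1) = 0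
  have hcf : c * (f - 1) = 0 := by
    have h2' : 2 * c * f * (1 - f) = 0 := by linear_combination E6
    rcases mul_eq_zero.mp h2' with h' | h'
    · rcases mul_eq_zero.mp h' with h'' | h''
      · rcases mul_eq_zero.mp h'' with h3' | h3'
        · norm_num at h3'
        · rw [h3']; ring
      · exact absurd h'' hf0
    · have : f = 1 := by linarith
      rw [this]; ring
  exact ⟨ha1, hb0, he0, hf2, hcf⟩

theorem stmt_11 (c : ℝ) (T : GL (Fin 2) ℝ) :
    (c ≠ 0 →
      (glAct T (christoffel 1 0 0 0 (1 + c^2) (2*c)) =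
          christoffel 1 0 0 0 (1 + c^2) (2*c) → T = 1)) ∧
    (c = 0 →
      (glAct T (christoffel 1 0 0 0 (1 + c^2) (2*c)) =
          christoffel 1 0 0 0 (1 + c^2) (2*c) ↔
        (T : Matrix (Fin 2) (Fin 2) ℝ) = 1 ∨
        (T : Matrix (Fin 2) (Fin 2) ℝ) = !![1, 0; 0, -1])) := by
  constructor
  · intro hc h
    obtain ⟨ha, hb, he, hf2, hcf⟩ := forward_key c T h
    have hf1 : (T : Matrix (Fin 2) (Fin 2) ℝ) 1 1 = 1 := by
      rcases mul_eq_zero.mp hcf with h' | h'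
      · exact absurd h' hc
      · linarith
    have hmat : (T : Matrix (Fin 2) (Fin 2) ℝ) = 1 := by
      ext i j
      fin_cases i <;> fin_cases j <;>
        simp [ha, hb, he, hf1, Matrix.one_apply]
    exact Units.ext (by simpa using hmat)
  · intro hc
    subst hc
    constructor
    · intro h
      obtain ⟨ha, hb, he, hf2, -⟩ := forward_key 0 T h
      have : ((T : Matrix (Fin 2) (Fin 2) ℝ) 1 1 - 1) *
          ((T : Matrix (Fin 2) (Fin 2) ℝ) 1 1 + 1) = 0 := by linear_combination hf2
      rcases mul_eq_zero.mp this with h' | h'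
      · left
        ext i j
        fin_cases i <;> fin_cases j <;>
          simp [ha, hb, he, Matrix.one_apply] <;> linarith
      · right
        ext i j
        fin_cases i <;> fin_cases j <;>
          simp [ha, hb, he] <;> linarith
    · intro h
      have hS := inv_coe_eq T
      have hdet := Matrix.det_fin_two (T : Matrix (Fin 2) (Fin 2) ℝ)
      rcases h with h | h
      · have hT1 : T = 1 := Units.ext (by simpa using h)
        subst hT1
        funext i j k
        fin_cases i <;> fin_cases j <;> fin_cases k <;>
          simp [glAct, christoffel, Fin.sum_univ_two] <;> norm_num
      · have hinv : ((T⁻¹ : GL (Fin 2) ℝ) : Matrix (Fin 2) (Fin 2) ℝ) =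
            !![1, 0; 0, -1] := by
          rw [hS, h]
          ext i j
          fin_cases i <;> fin_cases j <;>
            norm_num [Matrix.det_fin_two, Matrix.smul_apply]
        funext i j k
        fin_cases i <;> fin_cases j <;> fin_cases k <;>
          simp [glAct, christoffel, Fin.sum_univ_two, h, hinv] <;> norm_num
end

section
/- For c ∈ ℝ, let ℳ₅¹(c) denote the Christoffel tuple (1,0,0,0,1+c²,2c), i.e., Γ₁₁¹ = 1, Γ₂₂¹ = 1+c², Γ₂₂² = 2c, all other symbols zero. Suppose T ∈ GL(2,ℝ) has det T > 0 and (T·Γ(c))ᵢⱼᵏ = Γ(c')ᵢⱼᵏ for all i,j,k, where Γ(c), Γ(c') are the Christoffel symbols of ℳ₅¹(c), ℳ₅¹(c'). Then T is the identity matrix and c = c'. Consequently the subgroup GL₊(2,ℝ) of matrices with positive determinant acts without fixed points on the orbit set GL₊(2,ℝ)·{ℳ₅¹(c) : c ∈ ℝ}, and c ↦ ℳ₅¹(c) is a section of this action. -/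
open Matrix

/-- Solving the polynomial system for the inverse-matrix entries. -/
lemma aux_solve (c c' p q r s : ℝ)
    (hdN : 0 < p*s - q*r)
    (F1 : p^2 + (1+c^2)*r^2 = p)
    (F2 : 2*c*r^2 = r)
    (F3 : p*q + (1+c^2)*(r*s) = 0)
    (F4 : 2*c*(r*s) = 0)
    (F5 : q^2 + (1+c^2)*s^2 = p*(1+c'^2) + 2*c'*q)
    (F6 : 2*c*s^2 = r*(1+c'^2) + 2*c'*s) :
    p = 1 ∧ q = 0 ∧ r = 0 ∧ s = 1 ∧ c = c' := by
  have hr0 : r = 0 := by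
    rcases eq_or_ne c 0 with hc | hc
    · rw [hc] at F2; linarith
    · have hrs : r * s = 0 := by
        have h2c : (2*c) ≠ 0 := by intro h0; apply hc; linarith
        exact (mul_eq_zero.mp F4).resolve_left h2c
      rcases mul_eq_zero.mp hrs with h0 | h0
      · exact h0
      · -- s = 0 : contradiction via F6 forcing r = 0 and then det = 0
        have h1 : r * (1 + c'^2) = 0 := by
          linear_combination -F6 + (2*c*s - 2*c')*h0
        have h2 : (0:ℝ) < 1 + c'^2 := by positivity
        have hr0 : r = 0 := by
          rcases mul_eq_zero.mp h1 with h3 | h3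
          · exact h3
          · linarith
        rw [hr0, h0] at hdN; norm_num at hdN
  have hs0 : s ≠ 0 := by
    intro h0; rw [hr0, h0] at hdN; norm_num at hdN
  have hp0 : p ≠ 0 := by
    intro h0; rw [hr0, h0] at hdN; norm_num at hdN
  have hp1 : p = 1 := by
    have : p * (p - 1) = 0 := by linear_combination F1 - (1+c^2)*r*hr0
    rcases mul_eq_zero.mp this with h0 | h0
    · exact absurd h0 hp0
    · linarith
  have hq0 : q = 0 := by
    have : p * q = 0 := by linear_combination F3 - (1+c^2)*s*hr0
    exact (mul_eq_zero.mp this).resolve_left hp0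
  have hspos : 0 < s := by
    rw [hr0, hp1, hq0] at hdN; nlinarith
  have hcs : c * s = c' := by
    have : (2 * s) * (c * s - c') = 0 := by linear_combination F6 + (1+c'^2)*hr0
    rcases mul_eq_zero.mp this with h0 | h0
    · nlinarith
    · linarith
  have hs1 : s = 1 := by
    rw [hq0, hp1, ← hcs] at F5
    have hs2 : (s - 1) * (s + 1) = 0 := by linear_combination F5
    rcases mul_eq_zero.mp hs2 with h0 | h0
    · linarith
    · linarith
  exact ⟨hp1, hq0, hr0, hs1, by rw [← hcs, hs1, mul_one]⟩

set_option maxHeartbeats 1000000 in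
theorem stmt_12 (c c' : ℝ) (T : GL (Fin 2) ℝ)
    (hdet : 0 < (T : Matrix (Fin 2) (Fin 2) ℝ).det)
    (h : glAct T (christoffel 1 0 0 0 (1 + c^2) (2*c)) =
      christoffel 1 0 0 0 (1 + c'^2) (2*c')) :
    T = 1 ∧ c = c' := by
  set M : Matrix (Fin 2) (Fin 2) ℝ := (T : Matrix (Fin 2) (Fin 2) ℝ) with hM
  set N : Matrix (Fin 2) (Fin 2) ℝ := ((T⁻¹ : GL (Fin 2) ℝ) : Matrix (Fin 2) (Fin 2) ℝ) with hN
  have hMN : M * N = 1 := by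
    rw [hM, hN, ← Units.val_mul, mul_inv_cancel, Units.val_one]
  have hNM : N * M = 1 := by
    rw [hM, hN, ← Units.val_mul, inv_mul_cancel, Units.val_one]
  set α := M 0 0 with hα
  set β := M 0 1 with hβ
  set γ := M 1 0 with hγ
  set δ := M 1 1 with hδ
  set p := N 0 0 with hp
  set q := N 0 1 with hq
  set r := N 1 0 with hr
  set s := N 1 1 with hs
  have i1 : p*α + q*γ = 1 := by
    have := congrFun (congrFun hNM 0) 0
    simpa [Matrix.mul_apply, Fin.sum_univ_two, Matrix.one_apply] using this
  have i2 : p*β + q*δ = 0 := by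
    have := congrFun (congrFun hNM 0) 1
    simpa [Matrix.mul_apply, Fin.sum_univ_two, Matrix.one_apply] using this
  have i3 : r*α + s*γ = 0 := by
    have := congrFun (congrFun hNM 1) 0
    simpa [Matrix.mul_apply, Fin.sum_univ_two, Matrix.one_apply] using this
  have i4 : r*β + s*δ = 1 := by
    have := congrFun (congrFun hNM 1) 1
    simpa [Matrix.mul_apply, Fin.sum_univ_two, Matrix.one_apply] using this
  have E1 := congrFun (congrFun (congrFun h 0) 0) 0
  have E2 := congrFun (congrFun (congrFun h 0) 0) 1
  have E3 := congrFun (congrFun (congrFun h 0) 1) 0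
  have E4 := congrFun (congrFun (congrFun h 0) 1) 1
  have E5 := congrFun (congrFun (congrFun h 1) 1) 0
  have E6 := congrFun (congrFun (congrFun h 1) 1) 1
  simp only [glAct, christoffel, Fin.sum_univ_two, Matrix.cons_val_zero,
    Matrix.cons_val_one, Matrix.head_cons, ← hM, ← hN, ← hα, ← hβ, ← hγ, ← hδ,
    ← hp, ← hq, ← hr, ← hs] at E1 E2 E3 E4 E5 E6
  have F1 : p^2 + (1+c^2)*r^2 = p := by
    linear_combination p*E1 + q*E2 - (p^2+(1+c^2)*r^2)*i1 - 2*c*r^2*i2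
  have F2 : 2*c*r^2 = r := by
    linear_combination r*E1 + s*E2 - (p^2+(1+c^2)*r^2)*i3 - 2*c*r^2*i4
  have F3 : p*q + (1+c^2)*(r*s) = 0 := by
    linear_combination p*E3 + q*E4 - (p*q+(1+c^2)*(r*s))*i1 - 2*c*(r*s)*i2
  have F4 : 2*c*(r*s) = 0 := by
    linear_combination r*E3 + s*E4 - (p*q+(1+c^2)*(r*s))*i3 - 2*c*(r*s)*i4
  have F5 : q^2 + (1+c^2)*s^2 = p*(1+c'^2) + 2*c'*q := by
    linear_combination p*E5 + q*E6 - (q^2+(1+c^2)*s^2)*i1 - 2*c*s^2*i2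
  have F6 : 2*c*s^2 = r*(1+c'^2) + 2*c'*s := by
    linear_combination r*E5 + s*E6 - (q^2+(1+c^2)*s^2)*i3 - 2*c*s^2*i4
  have hdetpos : 0 < α*δ - β*γ := by
    rw [Matrix.det_fin_two] at hdet; exact hdet
  have hdd : (α*δ - β*γ) * (p*s - q*r) = 1 := by
    have := congrArg Matrix.det hMN
    rw [Matrix.det_mul, Matrix.det_one, Matrix.det_fin_two, Matrix.det_fin_two] at this
    linear_combination this
  have hdN : 0 < p*s - q*r := by
    by_contra h0
    push_neg at h0
    nlinarith [mul_nonneg (le_of_lt hdetpos) (neg_nonneg.mpr h0)]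
  clear E1 E2 E3 E4 E5 E6 h hdd hdet
  obtain ⟨hp1, hq0, hr0, hs1, hcc⟩ := aux_solve c c' p q r s hdN F1 F2 F3 F4 F5 F6
  refine ⟨?_, hcc⟩
  have hα1 : α = 1 := by rw [hp1, hq0] at i1; linarith
  have hβ0 : β = 0 := by rw [hp1, hq0] at i2; linarith
  have hγ0 : γ = 0 := by rw [hr0, hs1] at i3; linarith
  have hδ1 : δ = 1 := by rw [hr0, hs1] at i4; linarith
  have hMeq : M = 1 := by
    ext i j
    fin_cases i <;> fin_cases j <;>
      simp only [Matrix.one_apply, if_true, if_false] <;>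
      norm_num [← hα, ← hβ, ← hγ, ← hδ] <;>
      first
        | exact hα1
        | exact hβ0
        | exact hγ0
        | exact hδ1
  exact Units.ext (by rw [← hM, hMeq, Units.val_one])
end

section
/- Define U₁(r,s) = (1+rs², −s(1+rs²), rs, −rs², r, −rs) and U₃(u,v) = (u,v,0,1+u,0,0), maps from ℝ² to ℝ⁶. Then Range(U₁) ∩ Range(U₃) = ∅, and for every w ∈ ℝ the point (0, 2w, 0, 1, 0, 0) lies in the closure of Range(U₁) in ℝ⁶ and lies in Range(U₃). -/
open Matrix

/-- `(x¹)²` times the Ricci tensor of the Type B model `𝒩(a,b,c,d,e,f)`. -/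
def ρB : R6 → Matrix (Fin 2) (Fin 2) ℝ
  | (a, b, c, d, e, f) =>
    !![(a-d+1)*d + b*(f-c), c*d - b*e + f;
       c*(d-1) - b*e, -c^2 + f*c + (a-d-1)*e]

def U1 : ℝ × ℝ → R6 := fun p =>
  (1 + p.1*p.2^2, -p.2*(1 + p.1*p.2^2), p.1*p.2, -p.1*p.2^2, p.1, -p.1*p.2)

def U2 : ℝ × ℝ → R6 := fun p => (p.1, p.2, 0, 0, 0, 0)

def U3 : ℝ × ℝ → R6 := fun p => (p.1, p.2, 0, 1 + p.1, 0, 0)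

theorem stmt_16 :
    Set.range U1 ∩ Set.range U3 = ∅ ∧
    ∀ w : ℝ, ((0, 2*w, 0, 1, 0, 0) : R6) ∈ closure (Set.range U1) ∧
      ((0, 2*w, 0, 1, 0, 0) : R6) ∈ Set.range U3 := by
  constructor
  · ext x
    simp only [Set.mem_inter_iff, Set.mem_range, Set.mem_empty_iff_false, iff_false]
    rintro ⟨⟨⟨r, s⟩, h1⟩, ⟨u, v⟩, h3⟩
    rw [← h3] at h1
    simp only [U1, U3, Prod.mk.injEq] at h1
    obtain ⟨e1, e2, e3, e4, e5, e6⟩ := h1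
    -- e5 : r = 0, e4 : -r s² = 1 + u, e1 : 1 + r s² = u
    nlinarith [e1, e4, e5]
  · intro w
    refine ⟨?_, ⟨(0, 2*w), by simp [U3]⟩⟩
    set F : ℝ → R6 := fun ε =>
      (-2*w*ε, 2*w, (-1-2*w*ε)*ε, 1+2*w*ε, (-1-2*w*ε)*ε^2, (1+2*w*ε)*ε) with hF
    have hcont : Continuous F := by
      unfold F
      fun_prop
    have hF0 : F 0 = ((0, 2*w, 0, 1, 0, 0) : R6) := by
      simp [hF]
    have htend : Filter.Tendsto F (nhdsWithin 0 {(0:ℝ)}ᶜ) (nhds ((0, 2*w, 0, 1, 0, 0) : R6)) := by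
      rw [← hF0]
      exact (hcont.tendsto 0).mono_left nhdsWithin_le_nhds
    refine mem_closure_of_tendsto htend ?_
    filter_upwards [self_mem_nhdsWithin] with ε (hε : ε ≠ 0)
    refine ⟨((-1-2*w*ε)*ε^2, 1/ε), ?_⟩
    simp only [U1, hF]
    field_simp
    ring_nf
    rw [mul_assoc w ε ε⁻¹, mul_inv_cancel₀ hε, mul_one]
end
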